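/- arXiv:1110.1538 — 6 statements merged into one kernel-verified Lean document; each statement's English description precedes it below -/
import Mathlib

section
/- A finite ring R (associative with 1) is a left chain ring (its left ideals are totally ordered by inclusion) if and only if it is a right chain ring (its right ideals are totally ordered by inclusion). -/
lemma FinChain.mul_eq_one_comm {M : Type*} [Monoid M] [Finite M] {a b : M}
    (h : a * b = 1) : b * a = 1 := by
  have hinj : Function.Injective (fun x : M => b * x) := by
    intro x y hxy
    have h2 : a * (b * x) = a * (b * y) := congrArg (a * ·) hxy
    simpa [← mul_assoc, h] using h2
  obtain ⟨c, hc⟩ := Finite.surjective_of_injective hinj 1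
  simp only at hc
  have hac : a = c := by
    calc a = a * (b * c) := by rw [hc, mul_one]
    _ = (a * b) * c := by rw [mul_assoc]
    _ = c := by rw [h, one_mul]
  rw [hac]; exact hc

lemma FinChain.key {S : Type*} [Ring S] [Fintype S]
    (hchain : ∀ I J : Ideal S, I ≤ J ∨ J ≤ I) (a b : S) :
    (∃ r, a = b * r) ∨ (∃ r, b = a * r) := by
  classical
  rcases subsingleton_or_nontrivial S with hS | hS
  · exact Or.inl ⟨0, Subsingleton.elim _ _⟩
  -- one-sided inverses are two-sided
  have hunit : ∀ x y : S, x * y = 1 → IsUnit y :=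
    fun x y h => ⟨⟨y, x, FinChain.mul_eq_one_comm h, h⟩, rfl⟩
  have hunitl : ∀ x y : S, x * y = 1 → IsUnit x :=
    fun x y h => hunit y x (FinChain.mul_eq_one_comm h)
  -- comparability of elements
  have hcomp : ∀ x y : S, (∃ r, x = r * y) ∨ (∃ r, y = r * x) := by
    intro x y
    rcases hchain (Ideal.span {x}) (Ideal.span {y}) with h | h
    · left
      obtain ⟨r, hr⟩ := Submodule.mem_span_singleton.mp
        (h (Ideal.subset_span (Set.mem_singleton x)))
      exact ⟨r, by rw [← hr, smul_eq_mul]⟩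
    · right
      obtain ⟨r, hr⟩ := Submodule.mem_span_singleton.mp
        (h (Ideal.subset_span (Set.mem_singleton y)))
      exact ⟨r, by rw [← hr, smul_eq_mul]⟩
  -- nonunits are closed under addition
  have hm_add : ∀ x y : S, ¬IsUnit x → ¬IsUnit y → ¬IsUnit (x + y) := by
    intro x y hx hy hxy
    obtain ⟨u, hu⟩ := hxy
    have h1 : (↑u⁻¹ : S) * x + (↑u⁻¹ : S) * y = 1 := by
      rw [← mul_add, ← hu, Units.inv_mul]
    rcases hcomp ((↑u⁻¹ : S) * x) ((↑u⁻¹ : S) * y) with ⟨r, hr⟩ | ⟨r, hr⟩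
    · apply hy
      have h2 : (r + 1) * ((↑u⁻¹ : S) * y) = 1 := by
        rw [add_mul, one_mul, ← hr, h1]
      have h3 : IsUnit ((↑u⁻¹ : S) * y) := hunit _ _ h2
      have h4 : (↑u : S) * ((↑u⁻¹ : S) * y) = y := by
        rw [← mul_assoc, Units.mul_inv, one_mul]
      rw [← h4]; exact u.isUnit.mul h3
    · apply hx
      have h2 : (r + 1) * ((↑u⁻¹ : S) * x) = 1 := by
        rw [add_mul, one_mul, ← hr, add_comm, h1]
      have h3 : IsUnit ((↑u⁻¹ : S) * x) := hunit _ _ h2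
      have h4 : (↑u : S) * ((↑u⁻¹ : S) * x) = x := by
        rw [← mul_assoc, Units.mul_inv, one_mul]
      rw [← h4]; exact u.isUnit.mul h3
  -- the ideal of nonunits
  set m : Ideal S :=
    { carrier := {x : S | ¬IsUnit x}
      add_mem' := fun {x y} hx hy => hm_add x y hx hy
      zero_mem' := not_isUnit_zero
      smul_mem' := by
        intro r x hx
        simp only [Set.mem_setOf_eq, smul_eq_mul] at *
        intro h
        obtain ⟨u, hu⟩ := h
        apply hx
        exact hunit _ _ (show ((↑u⁻¹ : S) * r) * x = 1 by
          rw [mul_assoc, ← hu, Units.inv_mul]) } with hm_def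
  have hm_mem : ∀ x : S, x ∈ m ↔ ¬IsUnit x := fun x => Iff.rfl
  -- every ideal is principal
  have hprin : ∀ I : Ideal S, ∃ g : S, I = Ideal.span {g} := by
    intro I
    obtain ⟨g, hgI, hmax⟩ := Set.Finite.exists_maximalFor
      (fun x : S => Ideal.span {x}) (I : Set S) (Set.toFinite _) ⟨0, I.zero_mem⟩
    refine ⟨g, le_antisymm ?_ ?_⟩
    · intro y hy
      rcases hchain (Ideal.span {y}) (Ideal.span {g}) with h | h
      · exact h (Ideal.subset_span rfl)
      · rw [le_antisymm h (hmax hy h)]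
        exact Ideal.subset_span rfl
    · rw [Ideal.span_le, Set.singleton_subset_iff]
      exact hgI
  obtain ⟨θ, hθ⟩ := hprin m
  have hmθ : ∀ x : S, ¬IsUnit x ↔ ∃ r, x = r * θ := by
    intro x
    rw [← hm_mem, hθ]
    constructor
    · intro h
      obtain ⟨r, hr⟩ := Submodule.mem_span_singleton.mp h
      exact ⟨r, by rw [← hr, smul_eq_mul]⟩
    · rintro ⟨r, rfl⟩
      exact Submodule.mem_span_singleton.mpr ⟨r, by rw [smul_eq_mul]⟩
  have hθnu : ¬IsUnit θ := (hmθ θ).mpr ⟨1, (one_mul θ).symm⟩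
  -- products with a nonunit are nonunits
  have hnul : ∀ x y : S, ¬IsUnit x → ¬IsUnit (x * y) := by
    intro x y hx h
    obtain ⟨u, hu⟩ := h
    exact hx (hunitl x (y * (↑u⁻¹ : S)) (by rw [← mul_assoc, ← hu, Units.mul_inv]))
  have hnur : ∀ x y : S, ¬IsUnit x → ¬IsUnit (y * x) := by
    intro x y hx h
    obtain ⟨u, hu⟩ := h
    exact hx (hunit ((↑u⁻¹ : S) * y) x (by rw [mul_assoc, ← hu, Units.inv_mul]))
  -- θ * r can be rewritten as s * θ
  have hcommθ : ∀ r : S, ∃ s, θ * r = s * θ :=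
    fun r => (hmθ (θ * r)).mp (hnul θ r hθnu)
  -- 1 - t is a unit for t a nonunit
  have honesub : ∀ t : S, ¬IsUnit t → IsUnit (1 - t) := by
    intro t ht
    by_contra h
    have h2 : ¬IsUnit (t + (1 - t)) := hm_add t (1 - t) ht h
    rw [add_sub_cancel] at h2
    exact h2 isUnit_one
  -- θ is nilpotent
  have hnil : ∃ n, θ ^ n = 0 := by
    obtain ⟨i, j, hne, hij⟩ := Finite.exists_ne_map_eq_of_infinite (fun n : ℕ => θ ^ n)
    have hij' : θ ^ i = θ ^ j := hij
    wlog hlt : i < j generalizing i j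
    · exact this j i hne.symm hij.symm hij'.symm (by omega)
    have hc : 0 < j - i := by omega
    have hpow : θ ^ i * θ ^ (j - i) = θ ^ i := by
      rw [← pow_add, hij']; congr 1; omega
    have hθc : ¬IsUnit (θ ^ (j - i)) := by
      have : θ ^ (j - i) = θ * θ ^ (j - i - 1) := by
        rw [← pow_succ']; congr 1; omega
      rw [this]; exact hnul _ _ hθnu
    obtain ⟨v, hv⟩ := honesub _ hθc
    refine ⟨i, ?_⟩
    have h0 : θ ^ i * (1 - θ ^ (j - i)) = 0 := by
      rw [mul_sub, mul_one, hpow, sub_self]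
    calc θ ^ i = θ ^ i * ((↑v : S) * (↑v⁻¹ : S)) := by rw [Units.mul_inv, mul_one]
    _ = (θ ^ i * (↑v : S)) * (↑v⁻¹ : S) := by rw [mul_assoc]
    _ = 0 := by rw [hv, h0, zero_mul]
  obtain ⟨N, hN⟩ := hnil
  -- the key counting step: every nonunit is of the form θ*s + r*θ²
  have hA2 : ∀ x : S, ¬IsUnit x → ∃ s r, x = θ * s + r * (θ * θ) := by
    intro x hx
    by_cases hθ0 : θ = 0
    · obtain ⟨r, hr⟩ := (hmθ x).mp hx
      exact ⟨0, 0, by rw [hr, hθ0]; simp⟩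
    set m2 : Ideal S := Ideal.span {θ * θ} with hm2def
    have hm2mem : ∀ z : S, z ∈ m2 ↔ ∃ r, z = r * (θ * θ) := by
      intro z
      rw [hm2def]
      constructor
      · intro h
        obtain ⟨r, hr⟩ := Submodule.mem_span_singleton.mp h
        exact ⟨r, by rw [← hr, smul_eq_mul]⟩
      · rintro ⟨r, rfl⟩
        exact Submodule.mem_span_singleton.mpr ⟨r, by rw [smul_eq_mul]⟩
    have hm2r : ∀ z ∈ m2, ∀ t : S, z * t ∈ m2 := by
      intro z hz t
      obtain ⟨r, rfl⟩ := (hm2mem z).mp hz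
      obtain ⟨s, hs⟩ := hcommθ t
      obtain ⟨s', hs'⟩ := hcommθ s
      refine (hm2mem _).mpr ⟨r * s', ?_⟩
      have e1 : θ * (s * θ) = s' * (θ * θ) := by
        rw [← mul_assoc, hs', mul_assoc]
      calc r * (θ * θ) * t = r * (θ * (θ * t)) := by simp only [mul_assoc]
      _ = r * (θ * (s * θ)) := by rw [hs]
      _ = r * (s' * (θ * θ)) := by rw [e1]
      _ = r * s' * (θ * θ) := by rw [mul_assoc]
    have hθm2 : θ ∉ m2 := by
      intro h
      obtain ⟨r, hr⟩ := (hm2mem θ).mp h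
      obtain ⟨v, hv⟩ := honesub (r * θ) (hnur θ r hθnu)
      apply hθ0
      have h0 : (1 - r * θ) * θ = 0 := by
        rw [sub_mul, one_mul, mul_assoc, ← hr, sub_self]
      calc θ = (↑v⁻¹ : S) * ((↑v : S) * θ) := by
            rw [← mul_assoc, Units.inv_mul, one_mul]
      _ = (↑v⁻¹ : S) * ((1 - r * θ) * θ) := by rw [hv]
      _ = 0 := by rw [h0, mul_zero]
    -- membership criteria for the two "kernels"
    have hkerg : ∀ r : S, r * θ ∈ m2 ↔ ¬IsUnit r := by
      intro r
      constructor
      · intro h hru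
        obtain ⟨u, hu⟩ := hru
        apply hθm2
        have h2 : (↑u⁻¹ : S) • (r * θ) ∈ m2 := Submodule.smul_mem m2 _ h
        rwa [smul_eq_mul, ← mul_assoc, ← hu, Units.inv_mul, one_mul] at h2
      · intro hru
        obtain ⟨s, rfl⟩ := (hmθ r).mp hru
        exact (hm2mem _).mpr ⟨s, mul_assoc s θ θ⟩
    have hkerψ : ∀ r : S, θ * r ∈ m2 ↔ ¬IsUnit r := by
      intro r
      constructor
      · intro h hru
        obtain ⟨u, hu⟩ := hru
        apply hθm2
        have h2 := hm2r _ h (↑u⁻¹ : S)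
        rwa [mul_assoc, ← hu, Units.mul_inv, mul_one] at h2
      · intro hru
        obtain ⟨s, rfl⟩ := (hmθ r).mp hru
        obtain ⟨s', hs'⟩ := hcommθ s
        refine (hm2mem _).mpr ⟨s', ?_⟩
        rw [← mul_assoc, hs', mul_assoc]
    -- the two additive maps into S ⧸ m2
    let g : S →+ S ⧸ m2 := m2.mkQ.toAddMonoidHom.comp (AddMonoidHom.mulRight θ)
    let ψ : S →+ S ⧸ m2 := m2.mkQ.toAddMonoidHom.comp (AddMonoidHom.mulLeft θ)
    have hg : ∀ r : S, g r = Submodule.Quotient.mk (r * θ) := fun r => rfl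
    have hψ : ∀ r : S, ψ r = Submodule.Quotient.mk (θ * r) := fun r => rfl
    have hker : Setoid.ker ⇑g = Setoid.ker ⇑ψ := by
      apply Setoid.ext
      intro r r'
      show g r = g r' ↔ ψ r = ψ r'
      rw [hg, hg, hψ, hψ, Submodule.Quotient.eq, Submodule.Quotient.eq,
        ← sub_mul, ← mul_sub, hkerg, hkerψ]
    have hsub : Set.range ⇑ψ ⊆ Set.range ⇑g := by
      rintro q ⟨r, rfl⟩
      obtain ⟨s, hs⟩ := hcommθ r
      exact ⟨s, by rw [hg, hψ, hs]⟩
    have hcard : Nat.card (Set.range ⇑g) = Nat.card (Set.range ⇑ψ) := by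
      rw [← Nat.card_congr (Setoid.quotientKerEquivRange ⇑g),
        ← Nat.card_congr (Setoid.quotientKerEquivRange ⇑ψ), hker]
    have hrangeeq : Set.range ⇑ψ = Set.range ⇑g := by
      apply Set.eq_of_subset_of_ncard_le hsub
      rw [← Nat.card_coe_set_eq, ← Nat.card_coe_set_eq, hcard]
    obtain ⟨c, hc⟩ := (hmθ x).mp hx
    have hmem : (Submodule.Quotient.mk x : S ⧸ m2) ∈ Set.range ⇑ψ := by
      rw [hrangeeq]
      exact ⟨c, by rw [hg, ← hc]⟩
    obtain ⟨s, hs⟩ := hmem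
    rw [hψ] at hs
    have hd : x - θ * s ∈ m2 := by
      have := (Submodule.Quotient.eq m2).mp hs
      simpa using (neg_mem this : -(θ * s - x) ∈ m2)
    obtain ⟨r, hr⟩ := (hm2mem _).mp hd
    exact ⟨s, r, by rw [← hr]; abel⟩
  -- every nonunit is a left multiple of θ
  have hA : ∀ x : S, ¬IsUnit x → ∃ s, x = θ * s := by
    intro x hx
    have hstep : ∀ k : ℕ, ∃ s r, x = θ * s + r * θ ^ (k + 1) := by
      intro k
      induction k with
      | zero =>
        obtain ⟨r, hr⟩ := (hmθ x).mp hx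
        exact ⟨0, r, by rw [pow_one, mul_zero, zero_add]; exact hr⟩
      | succ k ih =>
        obtain ⟨s, r, hsr⟩ := ih
        obtain ⟨s', r', h2⟩ := hA2 (r * θ) (hnur θ r hθnu)
        refine ⟨s + s' * θ ^ k, r', ?_⟩
        have e1 : r * θ ^ (k + 1) = (r * θ) * θ ^ k := by
          rw [pow_succ', ← mul_assoc]
        have e3 : r' * (θ * θ) * θ ^ k = r' * θ ^ (k + 1 + 1) := by
          simp only [mul_assoc]
          congr 1
          rw [← pow_succ', ← pow_succ']
        have e2 : (r * θ) * θ ^ k = θ * (s' * θ ^ k) + r' * θ ^ (k + 1 + 1) := by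
          rw [h2, add_mul, ← e3, mul_assoc]
        calc x = θ * s + r * θ ^ (k + 1) := hsr
        _ = θ * s + (θ * (s' * θ ^ k) + r' * θ ^ (k + 1 + 1)) := by rw [e1, e2]
        _ = θ * (s + s' * θ ^ k) + r' * θ ^ (k + 1 + 1) := by rw [mul_add]; abel
    obtain ⟨s, r, hsr⟩ := hstep N
    refine ⟨s, ?_⟩
    rw [hsr, pow_succ, hN]
    simp
  -- moving any element past a power of θ
  have hcommL : ∀ (x : S) (k : ℕ), ∃ t, x * θ ^ k = θ ^ k * t := by
    intro x k
    induction k generalizing x with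
    | zero => exact ⟨x, by simp⟩
    | succ k ih =>
      obtain ⟨x₁, hx₁⟩ := hA (x * θ) (hnur θ x hθnu)
      obtain ⟨t, ht⟩ := ih x₁
      refine ⟨t, ?_⟩
      calc x * θ ^ (k + 1) = (x * θ) * θ ^ k := by rw [pow_succ', ← mul_assoc]
      _ = θ * (x₁ * θ ^ k) := by rw [hx₁, mul_assoc]
      _ = θ * (θ ^ k * t) := by rw [ht]
      _ = θ ^ (k + 1) * t := by rw [← mul_assoc, ← pow_succ']
  -- every nonzero nonunit is a unit times a power of θ
  have hrep : ∀ y : S, y ≠ 0 → ¬IsUnit y → ∃ (k : ℕ) (u : S), IsUnit u ∧ y = u * θ ^ k := by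
    intro y hy0 hynu
    set P : ℕ → Prop := fun k => ∃ r, y = r * θ ^ k with hP
    have hP1 : P 1 := by
      obtain ⟨r, hr⟩ := (hmθ y).mp hynu
      exact ⟨r, by rw [pow_one]; exact hr⟩
    have hN1 : 1 ≤ N := by
      rcases Nat.eq_zero_or_pos N with h | h
      · exfalso; rw [h, pow_zero] at hN; exact one_ne_zero hN
      · exact h
    set k := Nat.findGreatest P N with hk
    have hPk : P k := Nat.findGreatest_spec hN1 hP1
    have hkN : k ≠ N := by
      intro h
      obtain ⟨r, hr⟩ := hPk
      rw [h, hN, mul_zero] at hr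
      exact hy0 hr
    have hkN' : k + 1 ≤ N := Nat.lt_of_le_of_ne (Nat.findGreatest_le N) hkN
    have hnot : ¬P (k + 1) := Nat.findGreatest_is_greatest (Nat.lt_succ_self k) hkN'
    obtain ⟨r, hr⟩ := hPk
    refine ⟨k, r, ?_, hr⟩
    by_contra hru
    obtain ⟨s, hs⟩ := (hmθ r).mp hru
    exact hnot ⟨s, by rw [hr, hs, mul_assoc, ← pow_succ']⟩
  -- left divisibility implies right divisibility
  have hright : ∀ x y : S, (∃ r, x = r * y) → ∃ s, x = y * s := by
    rintro x y ⟨r, hr⟩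
    by_cases hyu : IsUnit y
    · obtain ⟨u, hu⟩ := hyu
      exact ⟨(↑u⁻¹ : S) * x, by rw [← hu, ← mul_assoc, Units.mul_inv, one_mul]⟩
    by_cases hy0 : y = 0
    · subst hy0; exact ⟨0, by rw [hr, mul_zero, mul_zero]⟩
    obtain ⟨k, u, huu, huy⟩ := hrep y hy0 hyu
    obtain ⟨U, hU⟩ := huu
    obtain ⟨t, ht⟩ := hcommL (r * u) k
    obtain ⟨d, hd⟩ := hcommL (↑U⁻¹ : S) k
    have hy' : y = (↑U : S) * θ ^ k := by rw [hU]; exact huy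
    refine ⟨d * t, ?_⟩
    calc x = θ ^ k * t := by rw [hr, huy, ← mul_assoc, ht]
    _ = (↑U : S) * ((↑U⁻¹ : S) * (θ ^ k * t)) := by
        rw [← mul_assoc, Units.mul_inv, one_mul]
    _ = (↑U : S) * ((θ ^ k * d) * t) := by
        rw [← mul_assoc ((↑U⁻¹ : S)) (θ ^ k) t, hd]
    _ = ((↑U : S) * θ ^ k) * (d * t) := by simp only [mul_assoc]
    _ = y * (d * t) := by rw [← hy']
  rcases hcomp a b with ⟨r, hr⟩ | ⟨r, hr⟩
  · exact Or.inl (hright a b ⟨r, hr⟩)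
  · exact Or.inr (hright b a ⟨r, hr⟩)

/-- A finite ring is a left chain ring iff it is a right chain ring. -/
theorem finite_left_chain_iff_right_chain (R : Type*) [Ring R] [Fintype R] :
    (∀ I J : Ideal R, I ≤ J ∨ J ≤ I) ↔
      (∀ I J : Ideal Rᵐᵒᵖ, I ≤ J ∨ J ≤ I) := by
  constructor
  · intro hchain I J
    by_contra hcon
    push_neg at hcon
    obtain ⟨hIJ, hJI⟩ := hcon
    obtain ⟨x, hxI, hxJ⟩ := SetLike.not_le_iff_exists.mp hIJ
    obtain ⟨y, hyJ, hyI⟩ := SetLike.not_le_iff_exists.mp hJI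
    rcases FinChain.key hchain x.unop y.unop with ⟨r, hr⟩ | ⟨r, hr⟩
    · apply hxJ
      have : x = MulOpposite.op r * y := by
        rw [← MulOpposite.op_unop x, hr, MulOpposite.op_mul, MulOpposite.op_unop]
      rw [this]
      exact J.smul_mem (MulOpposite.op r) hyJ
    · apply hyI
      have : y = MulOpposite.op r * x := by
        rw [← MulOpposite.op_unop y, hr, MulOpposite.op_mul, MulOpposite.op_unop]
      rw [this]
      exact I.smul_mem (MulOpposite.op r) hxI
  · intro hchain I J
    haveI : Fintype Rᵐᵒᵖ := Fintype.ofEquiv R MulOpposite.opEquiv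
    by_contra hcon
    push_neg at hcon
    obtain ⟨hIJ, hJI⟩ := hcon
    obtain ⟨x, hxI, hxJ⟩ := SetLike.not_le_iff_exists.mp hIJ
    obtain ⟨y, hyJ, hyI⟩ := SetLike.not_le_iff_exists.mp hJI
    rcases FinChain.key hchain (MulOpposite.op x) (MulOpposite.op y) with ⟨r, hr⟩ | ⟨r, hr⟩
    · apply hxJ
      have : x = r.unop * y := by
        have := congrArg MulOpposite.unop hr
        simpa using this
      rw [this]
      exact J.smul_mem r.unop hyJ
    · apply hyI
      have : y = r.unop * x := by
        have := congrArg MulOpposite.unop hr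
        simpa using this
      rw [this]
      exact I.smul_mem r.unop hxI
end

section
/- A finite ring R is a left chain ring if and only if R is local and its Jacobson radical is a principal left ideal. -/
section Aux

variable {R : Type*} [Ring R] [Fintype R]

/-- In a finite ring, a left inverse makes an element a unit. -/
lemma aux_isUnit_of_left_inv {x y : R} (h : y * x = 1) : IsUnit x := by
  have hinj : Function.Injective (fun r : R => x * r) := by
    intro r s hrs
    simp only at hrs
    have h2 : y * (x * r) = y * (x * s) := by rw [hrs]
    rwa [← mul_assoc, ← mul_assoc, h, one_mul, one_mul] at h2
  obtain ⟨z, hz⟩ := Finite.injective_iff_surjective.mp hinj 1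
  simp only at hz
  have hyz : y = z := by
    calc y = y * (x * z) := by rw [hz, mul_one]
    _ = (y * x) * z := by rw [mul_assoc]
    _ = z := by rw [h, one_mul]
  exact ⟨⟨x, z, hz, hyz ▸ h⟩, rfl⟩

/-- In a finite ring, a right inverse makes an element a unit. -/
lemma aux_isUnit_of_right_inv {x y : R} (h : x * y = 1) : IsUnit x := by
  have hy : IsUnit y := aux_isUnit_of_left_inv h
  obtain ⟨u, hu⟩ := hy.exists_right_inv
  have hxu : x = u := by
    calc x = x * (y * u) := by rw [hu, mul_one]
    _ = (x * y) * u := by rw [mul_assoc]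
    _ = u := by rw [h, one_mul]
  obtain ⟨w, hw⟩ := hy
  rw [← hw] at hu
  exact ⟨w⁻¹, by rw [Units.inv_eq_of_mul_eq_one_right hu, ← hxu]⟩

/-- In a finite ring, nonunits have proper span. -/
lemma aux_span_ne_top {x : R} (hx : ¬ IsUnit x) : Ideal.span {x} ≠ ⊤ := by
  intro h
  have h1 : (1 : R) ∈ Ideal.span {x} := h ▸ Submodule.mem_top
  obtain ⟨r, hr⟩ := Submodule.mem_span_singleton.mp h1
  exact hx (aux_isUnit_of_left_inv (by simpa [smul_eq_mul] using hr))

/-- In a finite local ring, every nonunit is in the Jacobson radical. -/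
lemma aux_nonunit_mem_jacobson [IsLocalRing R] {x : R} (hx : ¬ IsUnit x) :
    x ∈ Ideal.jacobson (⊥ : Ideal R) := by
  rw [Ideal.jacobson, Submodule.mem_sInf]
  rintro M ⟨-, hM⟩
  by_contra hxM
  have hsup : M ⊔ Ideal.span {x} = ⊤ := by
    by_contra hne
    have heq := hM.eq_of_le hne le_sup_left
    exact hxM (heq ▸ (le_sup_right : Ideal.span {x} ≤ M ⊔ Ideal.span {x})
      (Ideal.subset_span rfl))
  have h1 : (1 : R) ∈ M ⊔ Ideal.span {x} := hsup ▸ Submodule.mem_top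
  obtain ⟨m, hm, z, hz, hmz⟩ := Submodule.mem_sup.mp h1
  obtain ⟨r, hr⟩ := Submodule.mem_span_singleton.mp hz
  have hmnu : ¬ IsUnit m := fun hu =>
    hM.ne_top (Ideal.eq_top_of_isUnit_mem M hm hu)
  rcases IsLocalRing.isUnit_or_isUnit_of_add_one hmz with h | h
  · exact hmnu h
  · rw [← hr, smul_eq_mul] at h
    obtain ⟨v, hv⟩ := h.exists_left_inv
    exact hx (aux_isUnit_of_left_inv (y := v * r) (by rw [mul_assoc]; exact hv))

/-- Elements of the Jacobson radical are nonunits (in a nontrivial ring). -/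
lemma aux_not_isUnit_of_mem_jacobson [Nontrivial R] {x : R}
    (hx : x ∈ Ideal.jacobson (⊥ : Ideal R)) : ¬ IsUnit x := by
  intro hu
  obtain ⟨M, hM⟩ := Ideal.exists_maximal R
  have hxM : x ∈ M := by
    rw [Ideal.jacobson, Submodule.mem_sInf] at hx
    exact hx M ⟨bot_le, hM⟩
  exact hM.ne_top (Ideal.eq_top_of_isUnit_mem M hxM hu)

end Aux

/-- A finite ring is a left chain ring iff it is local and its Jacobson
radical is a principal left ideal. -/
theorem finite_left_chain_iff_local_principal_radical (R : Type*) [Ring R] [Fintype R]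
    [Nontrivial R] :
    (∀ I J : Ideal R, I ≤ J ∨ J ≤ I) ↔
      (IsLocalRing R ∧ ∃ a : R, Ideal.jacobson (⊥ : Ideal R) = Ideal.span {a}) := by
  classical
  constructor
  · intro hchain
    have hloc : IsLocalRing R := by
      refine ⟨?_⟩
      intro a b hab
      by_contra hcon
      push_neg at hcon
      obtain ⟨ha, hb⟩ := hcon
      obtain ⟨Ma, hMa, haMa⟩ := Ideal.exists_le_maximal _ (aux_span_ne_top ha)
      obtain ⟨Mb, hMb, hbMb⟩ := Ideal.exists_le_maximal _ (aux_span_ne_top hb)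
      have haM : a ∈ Ma := haMa (Ideal.subset_span rfl)
      have hbM : b ∈ Mb := hbMb (Ideal.subset_span rfl)
      rcases hchain Ma Mb with h | h
      · exact hMb.ne_top (Ideal.eq_top_iff_one Mb |>.mpr
          (hab ▸ Mb.add_mem (h haM) hbM))
      · exact hMa.ne_top (Ideal.eq_top_iff_one Ma |>.mpr
          (hab ▸ Ma.add_mem haM (h hbM)))
    refine ⟨hloc, ?_⟩
    set J := Ideal.jacobson (⊥ : Ideal R) with hJdef
    set s : Set (Ideal R) := (fun x => Ideal.span {x}) '' {x : R | x ∈ J} with hs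
    have hsfin : s.Finite := Set.Finite.image _ (Set.toFinite _)
    have hsne : s.Nonempty := ⟨Ideal.span {0}, 0, J.zero_mem, rfl⟩
    obtain ⟨m, hm, hmax⟩ : ∃ m ∈ s, ∀ a' ∈ s, id m ≤ id a' → id m = id a' := by
      obtain ⟨m, hm, hmax⟩ := Set.Finite.exists_maximalFor id s hsfin hsne
      exact ⟨m, hm, fun a' ha' h => le_antisymm h (hmax ha' h)⟩
    obtain ⟨a, haJ, ham⟩ := hm
    simp only at ham
    refine ⟨a, le_antisymm ?_ ?_⟩
    · intro x hx
      have hxs : Ideal.span {x} ∈ s := ⟨x, hx, rfl⟩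
      have hself : x ∈ Ideal.span {x} := Ideal.subset_span rfl
      rcases hchain (Ideal.span {x}) m with h | h
      · rw [ham]; exact h hself
      · have heq := hmax _ hxs h
        simp only [id] at heq
        rw [ham, heq]; exact hself
    · rw [Ideal.span_le]
      intro x hx
      rcases hx with rfl
      exact haJ
  · rintro ⟨hloc, a, hJ⟩
    have haJ : a ∈ Ideal.jacobson (⊥ : Ideal R) := hJ ▸ Ideal.subset_span rfl
    -- positive powers of a lie in the radical
    have hpow : ∀ m : ℕ, 1 ≤ m → a ^ m ∈ Ideal.jacobson (⊥ : Ideal R) := by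
      intro m hm
      rw [hJ]
      exact Submodule.mem_span_singleton.mpr ⟨a ^ (m - 1), by
        rw [smul_eq_mul, ← pow_succ, Nat.sub_add_cancel hm]⟩
    -- key: units are exactly elements outside the radical
    have hunit : ∀ x : R, ¬ IsUnit x ↔ x ∈ Ideal.jacobson (⊥ : Ideal R) := by
      intro x
      exact ⟨aux_nonunit_mem_jacobson, fun h => aux_not_isUnit_of_mem_jacobson h⟩
    -- a is nilpotent
    have hnil : ∃ n : ℕ, 1 ≤ n ∧ a ^ n = 0 := by
      obtain ⟨i, j, hne, hij⟩ := Finite.exists_ne_map_eq_of_infinite (fun n : ℕ => a ^ n)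
      wlog hlt : i < j generalizing i j
      · exact this j i hne.symm hij.symm (by omega)
      have hkey : a ^ i * (1 - a ^ (j - i)) = 0 := by
        rw [mul_sub, mul_one, ← pow_add]
        rw [show i + (j - i) = j by omega]
        rw [hij, sub_self]
      have hu : IsUnit (1 - a ^ (j - i)) := by
        by_contra hnu
        have hmem := (hunit _).mp hnu
        obtain ⟨M, hM⟩ := Ideal.exists_maximal R
        have hM1 : (1 : R) ∈ M := by
          have h1 : (1 - a ^ (j - i)) ∈ M := by
            rw [Ideal.jacobson, Submodule.mem_sInf] at hmem
            exact hmem M ⟨bot_le, hM⟩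
          have h2 : a ^ (j - i) ∈ M := by
            have := hpow (j - i) (by omega)
            rw [Ideal.jacobson, Submodule.mem_sInf] at this
            exact this M ⟨bot_le, hM⟩
          simpa using M.add_mem h1 h2
        exact hM.ne_top ((Ideal.eq_top_iff_one M).mpr hM1)
      rcases Nat.eq_zero_or_pos i with rfl | hi
      · exfalso
        have : a ^ (j - 0) = 1 := by
          have := hkey
          simp only [pow_zero, one_mul, sub_eq_zero] at this
          exact this.symm
        have hau : IsUnit a := by
          apply aux_isUnit_of_right_inv (y := a ^ (j - 0 - 1))
          rw [← pow_succ']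
          rw [show j - 0 - 1 + 1 = j - 0 by omega]
          exact this
        exact ((hunit a).mpr haJ) hau
      · refine ⟨i, hi, ?_⟩
        obtain ⟨v, hv⟩ := hu.exists_right_inv
        calc a ^ i = a ^ i * ((1 - a ^ (j - i)) * v) := by rw [hv, mul_one]
        _ = (a ^ i * (1 - a ^ (j - i))) * v := by rw [mul_assoc]
        _ = 0 := by rw [hkey, zero_mul]
    obtain ⟨n, hn1, hn⟩ := hnil
    -- monotonicity of spans of powers
    have hmono : ∀ m k : ℕ, m ≤ k → Ideal.span {a ^ k} ≤ Ideal.span {a ^ m} := by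
      intro m k hmk
      rw [Ideal.span_le]
      intro x hx
      rcases hx with rfl
      exact Submodule.mem_span_singleton.mpr ⟨a ^ (k - m), by
        rw [smul_eq_mul, ← pow_add]; congr 1; omega⟩
    -- key lemma: every principal ideal is a span of a power of a
    have hKL : ∀ x : R, ∃ k : ℕ, Ideal.span {x} = Ideal.span {a ^ k} := by
      intro x
      by_cases hx0 : x = 0
      · exact ⟨n, by rw [hx0, hn]⟩
      have hex : ∃ k : ℕ, x ∉ Ideal.span {a ^ (k + 1)} := by
        refine ⟨n - 1, ?_⟩
        rw [show n - 1 + 1 = n by omega, hn]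
        simp [Ideal.span_singleton_eq_bot.mpr rfl, hx0]
      set k := Nat.find hex with hk
      have hknot : x ∉ Ideal.span {a ^ (k + 1)} := Nat.find_spec hex
      have hkmem : x ∈ Ideal.span {a ^ k} := by
        rcases Nat.eq_zero_or_pos k with hk0 | hkpos
        · rw [hk0]; simp [Ideal.span_singleton_one]
        · have := Nat.find_min hex (m := k - 1) (by omega)
          push_neg at this
          rw [show k - 1 + 1 = k by omega] at this
          exact this
      obtain ⟨r, hr⟩ := Submodule.mem_span_singleton.mp hkmem
      rw [smul_eq_mul] at hr
      have hrnu : IsUnit r := by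
        by_contra hnu
        have hrJ := (hunit r).mp hnu
        rw [hJ] at hrJ
        obtain ⟨s, hs⟩ := Submodule.mem_span_singleton.mp hrJ
        rw [smul_eq_mul] at hs
        apply hknot
        refine Submodule.mem_span_singleton.mpr ⟨s, ?_⟩
        rw [smul_eq_mul, ← hr, ← hs, mul_assoc, ← pow_succ']
      refine ⟨k, le_antisymm ?_ ?_⟩
      · rw [Ideal.span_le]
        intro y hy
        rcases hy with rfl
        exact Submodule.mem_span_singleton.mpr ⟨r, by rw [smul_eq_mul, hr]⟩
      · rw [Ideal.span_le]
        intro y hy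
        rcases hy with rfl
        obtain ⟨v, hv⟩ := hrnu.exists_left_inv
        refine Submodule.mem_span_singleton.mpr ⟨v, ?_⟩
        rw [smul_eq_mul, ← hr, ← mul_assoc, hv, one_mul]
    -- conclude totality
    intro I I'
    by_cases hII' : I ≤ I'
    · exact Or.inl hII'
    right
    rw [SetLike.not_le_iff_exists] at hII'
    obtain ⟨x, hxI, hxI'⟩ := hII'
    obtain ⟨k, hkx⟩ := hKL x
    intro y hy
    obtain ⟨m, hmy⟩ := hKL y
    rcases le_total k m with hkm | hmk
    · have hle : Ideal.span {y} ≤ Ideal.span {x} := by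
        rw [hkx, hmy]; exact hmono k m hkm
      have hxIle : Ideal.span {x} ≤ I := Ideal.span_le.mpr (Set.singleton_subset_iff.mpr hxI)
      exact hxIle (hle (Ideal.subset_span rfl))
    · exfalso
      have : Ideal.span {x} ≤ Ideal.span {y} := by
        rw [hkx, hmy]; exact hmono m k hmk
      exact hxI' ((Ideal.span_le.mpr (Set.singleton_subset_iff.mpr hy) :
        Ideal.span {y} ≤ I') (this (Ideal.subset_span rfl)))
end

section
/- Let R be a finite ring and x, y ∈ R. If Rx = Ry as left ideals, then R^× x = R^× y, i.e. y = ux for some unit u ∈ R^×. -/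
open Function

section Aux

variable {S : Type*} [Ring S]

universe u

/-- eventually periodic powers in a finite monoid -/
lemma exists_period {G : Type*} [Monoid G] [Finite G] (t : G) :
    ∃ m d : ℕ, 0 < d ∧ ∀ i, m ≤ i → t ^ (i + d) = t ^ i := by
  obtain ⟨i, j, hne, hij⟩ := Finite.exists_ne_map_eq_of_infinite (fun n : ℕ => t ^ n)
  rcases hne.lt_or_gt with hlt | hlt
  · refine ⟨i, j - i, by omega, fun k hk => ?_⟩
    have h1 : k + (j - i) = (k - i) + j := by omega
    have h2 : k = (k - i) + i := by omega
    rw [h1, pow_add, ← hij, ← pow_add, ← h2]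
  · refine ⟨j, i - j, by omega, fun k hk => ?_⟩
    have h1 : k + (i - j) = (k - j) + i := by omega
    have h2 : k = (k - j) + j := by omega
    rw [h1, pow_add, hij, ← pow_add, ← h2]

lemma period_mul {G : Type*} [Monoid G] (t : G) {m d : ℕ}
    (hper : ∀ i, m ≤ i → t ^ (i + d) = t ^ i) :
    ∀ c i, m ≤ i → t ^ (i + c * d) = t ^ i := by
  intro c
  induction c with
  | zero => simp
  | succ n ih =>
    intro i hi
    have : i + (n + 1) * d = (i + n * d) + d := by ring
    rw [this, hper _ (by omega), ih i hi]

end Aux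

section Count

variable {S : Type u} [Ring S]


/-- homs with given kernel correspond to injections from the quotient -/
noncomputable def kerFiberEquiv (X B : Type u) [AddCommGroup X] [Module S X]
    [AddCommGroup B] [Module S B] (N : Submodule S X) :
    {f : X →ₗ[S] B // LinearMap.ker f = N} ≃ {g : (X ⧸ N) →ₗ[S] B // Injective g} where
  toFun f := ⟨N.liftQ f.1 (le_of_eq f.2.symm), by
    rw [← LinearMap.ker_eq_bot, Submodule.ker_liftQ, f.2, eq_bot_iff,
      Submodule.map_le_iff_le_comap, Submodule.comap_bot, Submodule.ker_mkQ]⟩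
  invFun g := ⟨g.1.comp N.mkQ, by
    rw [LinearMap.ker_comp, LinearMap.ker_eq_bot.mpr g.2, Submodule.comap_bot,
      Submodule.ker_mkQ]⟩
  left_inv f := Subtype.ext (Submodule.liftQ_mkQ _ _ _)
  right_inv g := Subtype.ext (by
    apply Submodule.linearMap_qext
    exact Submodule.liftQ_mkQ _ _ _)

/-- homs partitioned by kernel -/
noncomputable def homEquivSigma (X B : Type u) [AddCommGroup X] [Module S X]
    [AddCommGroup B] [Module S B] :
    (X →ₗ[S] B) ≃ Σ N : Submodule S X, {g : (X ⧸ N) →ₗ[S] B // Injective g} :=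
  ((Equiv.sigmaFiberEquiv (fun f : X →ₗ[S] B => LinearMap.ker f)).symm).trans
    (Equiv.sigmaCongrRight (fun N => kerFiberEquiv X B N))

end Count

section Count2

variable {S : Type u} [Ring S]

lemma finite_linearMap (X B : Type u) [AddCommGroup X] [Module S X]
    [AddCommGroup B] [Module S B] [Finite X] [Finite B] : Finite (X →ₗ[S] B) :=
  Finite.of_injective (fun f => (f : X → B)) DFunLike.coe_injective

/-- number of injective linear maps -/
noncomputable def icard (X B : Type u) [AddCommGroup X] [Module S X]
    [AddCommGroup B] [Module S B] : ℕ :=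
  Nat.card {g : X →ₗ[S] B // Injective g}

lemma icard_congr_left {X Y B : Type u} [AddCommGroup X] [Module S X]
    [AddCommGroup Y] [Module S Y] [AddCommGroup B] [Module S B]
    (e : X ≃ₗ[S] Y) : icard (S := S) X B = icard (S := S) Y B := by
  refine Nat.card_congr ⟨fun f => ⟨f.1.comp (e.symm : Y →ₗ[S] X), f.2.comp e.symm.injective⟩,
    fun g => ⟨g.1.comp (e : X →ₗ[S] Y), g.2.comp e.injective⟩, fun f => ?_, fun g => ?_⟩ <;>
  · apply Subtype.ext
    apply LinearMap.ext
    simp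

lemma hcard_congr_left {X Y B : Type u} [AddCommGroup X] [Module S X]
    [AddCommGroup Y] [Module S Y] [AddCommGroup B] [Module S B]
    (e : X ≃ₗ[S] Y) : Nat.card (X →ₗ[S] B) = Nat.card (Y →ₗ[S] B) := by
  refine Nat.card_congr ⟨fun f => f.comp (e.symm : Y →ₗ[S] X),
    fun g => g.comp (e : X →ₗ[S] Y), fun f => ?_, fun g => ?_⟩ <;>
  · apply LinearMap.ext
    simp

lemma hcard_congr_right {X B C : Type u} [AddCommGroup X] [Module S X]
    [AddCommGroup B] [Module S B] [AddCommGroup C] [Module S C]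
    (e : B ≃ₗ[S] C) : Nat.card (X →ₗ[S] B) = Nat.card (X →ₗ[S] C) := by
  refine Nat.card_congr ⟨fun f => (e : B →ₗ[S] C).comp f,
    fun g => (e.symm : C →ₗ[S] B).comp g, fun f => ?_, fun g => ?_⟩ <;>
  · apply LinearMap.ext
    simp

lemma hcard_eq_card_sigma (X B : Type u) [AddCommGroup X] [Module S X]
    [AddCommGroup B] [Module S B] :
    Nat.card (X →ₗ[S] B) =
      Nat.card (Σ N : Submodule S X, {g : (X ⧸ N) →ₗ[S] B // Injective g}) :=
  Nat.card_congr (homEquivSigma X B)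

end Count2

section Key

variable {S : Type u} [Ring S]

lemma nat_card_sigma {ι : Type u} [Fintype ι] (f : ι → Type u) [∀ i, Finite (f i)] :
    Nat.card ((i : ι) × f i) = ∑ i, Nat.card (f i) := by
  letI : ∀ i, Fintype (f i) := fun i => Fintype.ofFinite _
  rw [Nat.card_eq_fintype_card, Fintype.card_sigma]
  simp [Nat.card_eq_fintype_card]

lemma icard_eq_of_hcard_eq {B C : Type u} [AddCommGroup B] [Module S B] [Finite B]
    [AddCommGroup C] [Module S C] [Finite C]
    (H : ∀ (X : Type u) [AddCommGroup X] [Module S X] [Finite X],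
      Nat.card (X →ₗ[S] B) = Nat.card (X →ₗ[S] C)) :
    ∀ (X : Type u) [AddCommGroup X] [Module S X] [Finite X],
      icard (S := S) X B = icard (S := S) X C := by
  suffices h : ∀ n (X : Type u) [AddCommGroup X] [Module S X] [Finite X],
      Nat.card X = n → icard (S := S) X B = icard (S := S) X C by
    intro X _ _ _; exact h _ X rfl
  intro n
  induction n using Nat.strong_induction_on with
  | _ n ih =>
    intro X _ _ _ hn
    classical
    haveI : Finite (Submodule S X) := Finite.of_injective _ SetLike.coe_injective
    haveI : Fintype (Submodule S X) := Fintype.ofFinite _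
    haveI hQfin : ∀ N : Submodule S X, Finite (X ⧸ N) :=
      fun N => Finite.of_surjective _ N.mkQ_surjective
    haveI : ∀ N : Submodule S X, Finite {g : (X ⧸ N) →ₗ[S] B // Injective g} :=
      fun N => @Subtype.finite _ (finite_linearMap _ _) _
    haveI : ∀ N : Submodule S X, Finite {g : (X ⧸ N) →ₗ[S] C // Injective g} :=
      fun N => @Subtype.finite _ (finite_linearMap _ _) _
    have hlt : ∀ N : Submodule S X, N ≠ ⊥ → Nat.card (X ⧸ N) < Nat.card X := by
      intro N hN
      have hle : Nat.card (X ⧸ N) ≤ Nat.card X :=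
        Nat.card_le_card_of_surjective _ N.mkQ_surjective
      rcases lt_or_eq_of_le hle with h | h
      · exact h
      · exfalso
        have hbij : Bijective N.mkQ :=
          (Nat.bijective_iff_surjective_and_card _).mpr ⟨N.mkQ_surjective, h.symm⟩
        have : LinearMap.ker N.mkQ = ⊥ := LinearMap.ker_eq_bot.mpr hbij.injective
        rw [Submodule.ker_mkQ] at this
        exact hN this
    have hBs : Nat.card (X →ₗ[S] B) = ∑ N : Submodule S X, icard (S := S) (X ⧸ N) B := by
      rw [hcard_eq_card_sigma, nat_card_sigma]; rfl
    have hCs : Nat.card (X →ₗ[S] C) = ∑ N : Submodule S X, icard (S := S) (X ⧸ N) C := by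
      rw [hcard_eq_card_sigma, nat_card_sigma]; rfl
    have hmem : (⊥ : Submodule S X) ∈ (Finset.univ : Finset (Submodule S X)) :=
      Finset.mem_univ _
    have hsplitB := (Finset.add_sum_erase _ (fun N => icard (S := S) (X ⧸ N) B) hmem).symm
    have hsplitC := (Finset.add_sum_erase _ (fun N => icard (S := S) (X ⧸ N) C) hmem).symm
    have hrest : ∑ N ∈ Finset.univ.erase (⊥ : Submodule S X), icard (S := S) (X ⧸ N) B
        = ∑ N ∈ Finset.univ.erase (⊥ : Submodule S X), icard (S := S) (X ⧸ N) C := by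
      refine Finset.sum_congr rfl (fun N hN => ?_)
      have hNne : N ≠ ⊥ := (Finset.mem_erase.mp hN).1
      exact ih _ (hn ▸ hlt N hNne) _ rfl
    have hkey : icard (S := S) (X ⧸ (⊥ : Submodule S X)) B
        = icard (S := S) (X ⧸ (⊥ : Submodule S X)) C := by
      have := (hBs.symm.trans (H X)).trans hCs
      rw [hsplitB, hsplitC, hrest] at this
      exact Nat.add_right_cancel this
    have e := Submodule.quotEquivOfEqBot (⊥ : Submodule S X) rfl
    rw [← icard_congr_left e, ← icard_congr_left e]
    exact hkey

lemma exists_linearEquiv_of_hcard_eq {B C : Type u} [AddCommGroup B] [Module S B] [Finite B]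
    [AddCommGroup C] [Module S C] [Finite C]
    (hcard : Nat.card B = Nat.card C)
    (H : ∀ (X : Type u) [AddCommGroup X] [Module S X] [Finite X],
      Nat.card (X →ₗ[S] B) = Nat.card (X →ₗ[S] C)) :
    Nonempty (B ≃ₗ[S] C) := by
  haveI : Finite {g : B →ₗ[S] C // Injective g} := @Subtype.finite _ (finite_linearMap _ _) _
  haveI : Finite {g : B →ₗ[S] B // Injective g} := @Subtype.finite _ (finite_linearMap _ _) _
  have h1 : 0 < icard (S := S) B B :=
    Nat.card_pos_iff.mpr ⟨⟨⟨LinearMap.id, fun _ _ h => h⟩⟩, inferInstance⟩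
  have h2 : 0 < icard (S := S) B C := by
    rw [← icard_eq_of_hcard_eq H B]; exact h1
  obtain ⟨⟨g, hg⟩⟩ := Nat.card_pos_iff.mp h2 |>.1
  have hbij : Bijective g := (Nat.bijective_iff_injective_and_card _).mpr ⟨hg, hcard⟩
  exact ⟨LinearEquiv.ofBijective g hbij⟩

end Key

section Decomp

variable {S : Type u} [Ring S] {M : Type u} [AddCommGroup M] [Module S M]

lemma range_fix {e : Module.End S M} (he : e * e = e) {p : M}
    (hp : p ∈ LinearMap.range e) : e p = p := by
  obtain ⟨m, rfl⟩ := hp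
  rw [← Module.End.mul_apply, he]

/-- decomposition of a module along an idempotent endomorphism -/
noncomputable def idemDecomp (e : Module.End S M) (he : e * e = e) :
    M ≃ₗ[S] (LinearMap.range e × LinearMap.ker e) where
  toFun m := (⟨e m, ⟨m, rfl⟩⟩, ⟨m - e m, by
    rw [LinearMap.mem_ker, map_sub, ← Module.End.mul_apply, he, sub_self]⟩)
  map_add' m n := by
    refine Prod.ext (Subtype.ext ?_) (Subtype.ext ?_) <;> simp <;> abel
  map_smul' s m := by
    refine Prod.ext (Subtype.ext ?_) (Subtype.ext ?_) <;> simp [smul_sub]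
  invFun p := p.1.1 + p.2.1
  left_inv m := by simp
  right_inv := by
    rintro ⟨⟨p, hp⟩, ⟨q, hq⟩⟩
    have h1 : e p = p := range_fix he hp
    have h2 : e q = 0 := hq
    refine Prod.ext (Subtype.ext ?_) (Subtype.ext ?_) <;> simp [h1, h2]

lemma hcard_prod (X P Q : Type u) [AddCommGroup X] [Module S X]
    [AddCommGroup P] [Module S P] [AddCommGroup Q] [Module S Q] :
    Nat.card (X →ₗ[S] (P × Q)) = Nat.card (X →ₗ[S] P) * Nat.card (X →ₗ[S] Q) := by
  rw [← Nat.card_prod]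
  refine Nat.card_congr ⟨fun f => ((LinearMap.fst S P Q).comp f, (LinearMap.snd S P Q).comp f),
    fun p => p.1.prod p.2, fun f => ?_, fun p => ?_⟩
  · apply LinearMap.ext; intro m; simp
  · refine Prod.ext ?_ ?_ <;> (apply LinearMap.ext; intro m; simp)

end Decomp

section Main

variable {S : Type u} [Ring S]

theorem exists_linearAut {M : Type u} [AddCommGroup M] [Module S M] [Finite M]
    (x y : M) (α β : Module.End S M) (hα : α x = y) (hβ : β y = x) :
    ∃ γ : M ≃ₗ[S] M, γ x = y := by
  haveI : Finite (Module.End S M) := finite_linearMap M M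
  set t := β * α with ht
  obtain ⟨m, d, hd, hper⟩ := exists_period t
  set N := (m + 1) * d with hNdef
  have hmN : m + 1 ≤ N := by
    calc m + 1 = (m + 1) * 1 := by ring
    _ ≤ (m + 1) * d := Nat.mul_le_mul_left _ hd
  obtain ⟨K, hK⟩ : ∃ K, N = K + 1 := ⟨N - 1, by omega⟩
  have hKm : m ≤ K := by omega
  have hred : ∀ i, m ≤ i → t ^ (i + N) = t ^ i := fun i hi => period_mul t hper (m + 1) i hi
  set e := t ^ N with he_def
  have he : e * e = e := by
    rw [he_def, ← pow_add]
    exact hred N (by omega)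
  have hsc : ∀ k, α * t ^ k = (α * β) ^ k * α := by
    intro k
    induction k with
    | zero => simp
    | succ n ih =>
      rw [pow_succ, ← mul_assoc, ih, pow_succ]
      simp [ht, mul_assoc]
  have hsc2 : ∀ k, β * (α * β) ^ k = t ^ k * β := by
    intro k
    induction k with
    | zero => simp
    | succ n ih =>
      rw [pow_succ, ← mul_assoc, ih, pow_succ]
      simp [ht, mul_assoc]
  set f := (α * β) ^ N with hf_def
  have hf : f * f = f := by
    have h1 : ∀ k, (α * β) ^ (k + 1) = α * t ^ k * β := by
      intro k; rw [hsc k, mul_assoc, ← pow_succ]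
    rw [hf_def, ← pow_add]
    have h2 : N + N = (K + N) + 1 := by omega
    rw [h2, h1, hred K hKm, ← h1, ← hK]
  set g := t ^ K * β with hg_def
  have hga : g * α = e := by
    rw [hg_def, mul_assoc, ← ht, ← pow_succ, he_def, hK]
  have hag : α * g = f := by
    rw [hg_def, ← mul_assoc, hsc K, mul_assoc, ← pow_succ, hf_def, hK]
  have heg : e * g = g := by
    have : t ^ N * t ^ K = t ^ K := by
      rw [← pow_add, add_comm]; exact hred K hKm
    rw [hg_def, he_def, ← mul_assoc, this]
  have hgf : g * f = g := by
    have : t ^ K * t ^ N = t ^ K := by rw [← pow_add]; exact hred K hKm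
    rw [hg_def, hf_def, mul_assoc, hsc2 N, ← mul_assoc, this]
  have hαe : α * e = f * α := by rw [he_def, hf_def]; exact hsc N
  have htx : t x = x := by rw [Module.End.mul_apply, hα, hβ]
  have hpowx : ∀ k, (t ^ k) x = x := by
    intro k
    induction k with
    | zero => simp
    | succ n ih => rw [pow_succ, Module.End.mul_apply, htx, ih]
  have hx : e x = x := hpowx N
  have hsy : (α * β) y = y := by rw [Module.End.mul_apply, hβ, hα]
  have hpowy : ∀ k, ((α * β) ^ k) y = y := by
    intro k
    induction k with
    | zero => simp
    | succ n ih => rw [pow_succ, Module.End.mul_apply, hsy, ih]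
  have hy : f y = y := hpowy N
  -- restricted isomorphism between ranges
  have hm1 : ∀ p ∈ LinearMap.range e, α p ∈ LinearMap.range f := by
    rintro p ⟨q, rfl⟩
    exact ⟨α q, by rw [← Module.End.mul_apply, ← Module.End.mul_apply, hαe]⟩
  have hm2 : ∀ p ∈ LinearMap.range f, g p ∈ LinearMap.range e := by
    rintro p ⟨q, rfl⟩
    refine ⟨g q, ?_⟩
    calc e (g q) = (e * g) q := (Module.End.mul_apply _ _ _).symm
    _ = g q := by rw [heg]
    _ = (g * f) q := by rw [hgf]
    _ = g (f q) := Module.End.mul_apply _ _ _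
  set φ : LinearMap.range e →ₗ[S] LinearMap.range f := α.restrict hm1 with hφ
  set ψ : LinearMap.range f →ₗ[S] LinearMap.range e := g.restrict hm2 with hψ
  have hψφ : ∀ p : LinearMap.range e, ψ (φ p) = p := by
    rintro ⟨p, hp⟩
    apply Subtype.ext
    simp only [hφ, hψ, LinearMap.restrict_apply]
    calc g (α p) = (g * α) p := (Module.End.mul_apply _ _ _).symm
    _ = e p := by rw [hga]
    _ = p := range_fix he hp
  have hφψ : ∀ q : LinearMap.range f, φ (ψ q) = q := by
    rintro ⟨q, hq⟩
    apply Subtype.ext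
    simp only [hφ, hψ, LinearMap.restrict_apply]
    calc α (g q) = (α * g) q := (Module.End.mul_apply _ _ _).symm
    _ = f q := by rw [hag]
    _ = q := range_fix hf hq
  set iso1 : (LinearMap.range e) ≃ₗ[S] (LinearMap.range f) :=
    { φ with invFun := ψ, left_inv := hψφ, right_inv := hφψ } with hiso1
  -- counting
  haveI : Finite (LinearMap.range e : Submodule S M) := Subtype.finite
  haveI : Finite (LinearMap.ker e : Submodule S M) := Subtype.finite
  haveI : Finite (LinearMap.range f : Submodule S M) := Subtype.finite
  haveI : Finite (LinearMap.ker f : Submodule S M) := Subtype.finite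
  have hcards : Nat.card (LinearMap.ker e : Submodule S M)
      = Nat.card (LinearMap.ker f : Submodule S M) := by
    have h1 : Nat.card M = Nat.card (LinearMap.range e : Submodule S M)
        * Nat.card (LinearMap.ker e : Submodule S M) := by
      rw [Nat.card_congr (idemDecomp e he).toEquiv, Nat.card_prod]
    have h2 : Nat.card M = Nat.card (LinearMap.range f : Submodule S M)
        * Nat.card (LinearMap.ker f : Submodule S M) := by
      rw [Nat.card_congr (idemDecomp f hf).toEquiv, Nat.card_prod]
    have h3 : Nat.card (LinearMap.range e : Submodule S M)
        = Nat.card (LinearMap.range f : Submodule S M) := Nat.card_congr iso1.toEquiv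
    have hpos : 0 < Nat.card (LinearMap.range f : Submodule S M) :=
      Nat.card_pos_iff.mpr ⟨⟨0⟩, inferInstance⟩
    apply Nat.eq_of_mul_eq_mul_left hpos
    rw [h3] at h1
    rw [← h1, ← h2]
  have hH : ∀ (X : Type u) [AddCommGroup X] [Module S X] [Finite X],
      Nat.card (X →ₗ[S] (LinearMap.ker e : Submodule S M))
        = Nat.card (X →ₗ[S] (LinearMap.ker f : Submodule S M)) := by
    intro X _ _ _
    have h1 : Nat.card (X →ₗ[S] M)
        = Nat.card (X →ₗ[S] (LinearMap.range e : Submodule S M))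
          * Nat.card (X →ₗ[S] (LinearMap.ker e : Submodule S M)) := by
      rw [hcard_congr_right (idemDecomp e he), hcard_prod]
    have h2 : Nat.card (X →ₗ[S] M)
        = Nat.card (X →ₗ[S] (LinearMap.range f : Submodule S M))
          * Nat.card (X →ₗ[S] (LinearMap.ker f : Submodule S M)) := by
      rw [hcard_congr_right (idemDecomp f hf), hcard_prod]
    have h3 : Nat.card (X →ₗ[S] (LinearMap.range e : Submodule S M))
        = Nat.card (X →ₗ[S] (LinearMap.range f : Submodule S M)) := hcard_congr_right iso1
    haveI : Finite (X →ₗ[S] (LinearMap.range f : Submodule S M)) := finite_linearMap _ _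
    have hpos : 0 < Nat.card (X →ₗ[S] (LinearMap.range f : Submodule S M)) :=
      Nat.card_pos_iff.mpr ⟨⟨0⟩, inferInstance⟩
    apply Nat.eq_of_mul_eq_mul_left hpos
    rw [h3] at h1
    rw [← h1, ← h2]
  obtain ⟨θ⟩ := exists_linearEquiv_of_hcard_eq (S := S) hcards hH
  set γ : M ≃ₗ[S] M :=
    (idemDecomp e he).trans ((iso1.prodCongr θ).trans (idemDecomp f hf).symm) with hγ
  refine ⟨γ, ?_⟩
  have hstep : (iso1.prodCongr θ) ((idemDecomp e he) x) = (idemDecomp f hf) y := by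
    have hex : (idemDecomp e he) x = (⟨x, by rw [← hx]; exact ⟨x, rfl⟩⟩, 0) := by
      refine Prod.ext (Subtype.ext ?_) (Subtype.ext ?_)
      · exact hx
      · show x - e x = 0
        rw [hx, sub_self]
    have hfy : (idemDecomp f hf) y = (⟨y, by rw [← hy]; exact ⟨y, rfl⟩⟩, 0) := by
      refine Prod.ext (Subtype.ext ?_) (Subtype.ext ?_)
      · exact hy
      · show y - f y = 0
        rw [hy, sub_self]
    rw [hex, hfy]
    refine Prod.ext (Subtype.ext ?_) (Subtype.ext ?_)
    · show (iso1 _ : M) = y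
      simp only [hiso1]
      show (φ _ : M) = y
      rw [hφ, LinearMap.restrict_apply]
      exact hα
    · show (θ 0 : M) = 0
      rw [map_zero]
      rfl
  rw [hγ]
  simp only [LinearEquiv.trans_apply]
  rw [hstep, LinearEquiv.symm_apply_apply]

end Main

section Final

/-- In a finite ring, elements generating the same principal left ideal are
left associates: `Rx = Ry` implies `y = u x` for some unit `u`. -/
theorem finite_ring_span_eq_imp_unit_multiple {R : Type*} [Ring R] [Fintype R]
    (x y : R) (h : Ideal.span ({x} : Set R) = Ideal.span ({y} : Set R)) :
    ∃ u : Rˣ, y = (u : R) * x := by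
  have hy : y ∈ Ideal.span ({x} : Set R) := by
    rw [h]; exact Ideal.subset_span rfl
  have hx : x ∈ Ideal.span ({y} : Set R) := by
    rw [← h]; exact Ideal.subset_span rfl
  obtain ⟨a, ha⟩ := Submodule.mem_span_singleton.mp hy
  obtain ⟨b, hb⟩ := Submodule.mem_span_singleton.mp hx
  rw [smul_eq_mul] at ha hb
  haveI : Finite R := Finite.of_fintype R
  set α : Module.End Rᵐᵒᵖ R :=
    { toFun := fun r => a * r
      map_add' := mul_add a
      map_smul' := by
        intro s r
        show a * (r * s.unop) = (a * r) * s.unop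
        rw [mul_assoc] } with hαdef
  set β : Module.End Rᵐᵒᵖ R :=
    { toFun := fun r => b * r
      map_add' := mul_add b
      map_smul' := by
        intro s r
        show b * (r * s.unop) = (b * r) * s.unop
        rw [mul_assoc] } with hβdef
  obtain ⟨γ, hγ⟩ := exists_linearAut (S := Rᵐᵒᵖ) x y α β ha hb
  have hlin : ∀ r : R, γ r = γ 1 * r := by
    intro r
    have h1 : (MulOpposite.op r) • (1 : R) = r := by
      show 1 * r = r
      rw [one_mul]
    conv_lhs => rw [← h1, map_smul]
    show γ 1 * r = γ 1 * r
    rfl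
  have hlin2 : ∀ r : R, γ.symm r = γ.symm 1 * r := by
    intro r
    have h1 : (MulOpposite.op r) • (1 : R) = r := by
      show 1 * r = r
      rw [one_mul]
    conv_lhs => rw [← h1, map_smul]
    rfl
  refine ⟨⟨γ 1, γ.symm 1, ?_, ?_⟩, ?_⟩
  · rw [← hlin (γ.symm 1), LinearEquiv.apply_symm_apply]
  · rw [← hlin2 (γ 1), LinearEquiv.symm_apply_apply]
  · show y = γ 1 * x
    rw [← hlin x, hγ]

end Final
end

section
/- Let R be a finite ring and w : R → ℂ a weight with left symmetry group equal to R^× (i.e. w(ux) = w(x) for all units u and all x). Then w is constant on sets of elements generating the same principal left ideal: Rx = Ry implies w(x) = w(y). -/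
/- ### Auxiliary material:
  the key result is `StableRange.key`: in a finite ring, if `s * r - 1` lies in a
  left ideal `L`, then `r + ℓ` is a unit for some `ℓ ∈ L` (stable range one). -/

namespace WeightAux

universe u v

section Basic
variable {R : Type u} [Ring R]

lemma finUnit_of_mul_eq_one_left [Finite R] {v u : R} (h : v * u = 1) : IsUnit u := by
  have hsurj : Function.Surjective (fun x : R => x * u) := fun x =>
    ⟨x * v, by show x * v * u = x; rw [mul_assoc, h, mul_one]⟩
  have hinj : Function.Injective (fun x : R => x * u) :=
    (Finite.injective_iff_surjective).2 hsurj
  have huv : u * v = 1 := by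
    have : (u * v) * u = 1 * u := by rw [mul_assoc, h, mul_one, one_mul]
    exact hinj this
  exact ⟨⟨u, v, huv, h⟩, rfl⟩

lemma isUnit_one_add_swap {a b : R} (h : IsUnit (1 + a * b)) : IsUnit (1 + b * a) := by
  obtain ⟨⟨w, u, hwu, huw⟩, hw⟩ := h
  simp only at hw; subst hw
  have e1 : u + a * b * u = 1 := by
    have := hwu; rwa [add_mul, one_mul] at this
  have e2 : u + u * (a * b) = 1 := by
    have := huw; rwa [mul_add, mul_one] at this
  refine ⟨⟨1 + b * a, 1 - b * u * a, ?_, ?_⟩, rfl⟩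
  · have key : (1 + b * a) * (1 - b * u * a) = 1 + b * a - b * (u + a * b * u) * a := by
      noncomm_ring
    rw [key, e1]; noncomm_ring
  · have key : (1 - b * u * a) * (1 + b * a) = 1 + b * a - b * (u + u * (a * b)) * a := by
      noncomm_ring
    rw [key, e2]; noncomm_ring

end Basic

section Cancel

variable {R : Type u} [Ring R]

lemma finite_linearMap (X A : Type v) [AddCommGroup X] [Module R X]
    [AddCommGroup A] [Module R A] [Finite X] [Finite A] : Finite (X →ₗ[R] A) :=
  Finite.of_injective (fun f => (f : X → A)) DFunLike.coe_injective

lemma homSigma_bijective (X A : Type v) [AddCommGroup X] [Module R X]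
    [AddCommGroup A] [Module R A] :
    Function.Bijective
      (fun p : (Σ N : Submodule R X, {g : X ⧸ N →ₗ[R] A // Function.Injective g}) =>
        p.2.1 ∘ₗ p.1.mkQ) := by
  constructor
  · rintro ⟨N, g, hg⟩ ⟨N', g', hg'⟩ h
    simp only at h
    have hker : ∀ (N : Submodule R X) (g : X ⧸ N →ₗ[R] A), Function.Injective g →
        LinearMap.ker (g ∘ₗ N.mkQ) = N := by
      intro N g hg
      rw [LinearMap.ker_comp, LinearMap.ker_eq_bot.2 hg, Submodule.comap_bot,
        Submodule.ker_mkQ]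
    have hN : N = N' := by rw [← hker N g hg, ← hker N' g' hg', h]
    subst hN
    have hgg : g = g' := by
      refine LinearMap.ext fun m => ?_
      obtain ⟨z, rfl⟩ := N.mkQ_surjective m
      exact DFunLike.congr_fun h z
    subst hgg
    rfl
  · intro f
    refine ⟨⟨LinearMap.ker f, ⟨(LinearMap.ker f).liftQ f le_rfl, ?_⟩⟩, ?_⟩
    · rw [← LinearMap.ker_eq_bot]
      exact Submodule.ker_liftQ_eq_bot' _ _ rfl
    · exact (LinearMap.ker f).liftQ_mkQ f le_rfl

lemma card_hom_eq_sum (X A : Type v) [AddCommGroup X] [Module R X]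
    [AddCommGroup A] [Module R A] [Finite X] [Finite A] [Fintype (Submodule R X)] :
    Nat.card (X →ₗ[R] A)
      = ∑ N : Submodule R X,
          Nat.card {g : X ⧸ N →ₗ[R] A // Function.Injective g} := by
  classical
  haveI : ∀ N : Submodule R X, Finite (X ⧸ N) := fun N =>
    Finite.of_surjective _ N.mkQ_surjective
  haveI : ∀ N : Submodule R X, Finite (X ⧸ N →ₗ[R] A) := fun N => finite_linearMap _ _
  haveI : ∀ N : Submodule R X, Fintype {g : X ⧸ N →ₗ[R] A // Function.Injective g} :=
    fun N => Fintype.ofFinite _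
  calc Nat.card (X →ₗ[R] A)
      = Nat.card (Σ N : Submodule R X, {g : X ⧸ N →ₗ[R] A // Function.Injective g}) :=
        (Nat.card_congr (Equiv.ofBijective _ (homSigma_bijective X A))).symm
    _ = ∑ N : Submodule R X, Nat.card {g : X ⧸ N →ₗ[R] A // Function.Injective g} := by
        rw [Nat.card_eq_fintype_card, Fintype.card_sigma]
        exact Finset.sum_congr rfl fun N _ => (Nat.card_eq_fintype_card).symm

lemma card_inj_congr {X X' A : Type v} [AddCommGroup X] [Module R X]
    [AddCommGroup X'] [Module R X'] [AddCommGroup A] [Module R A]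
    (e : X ≃ₗ[R] X') :
    Nat.card {g : X →ₗ[R] A // Function.Injective g}
      = Nat.card {g : X' →ₗ[R] A // Function.Injective g} := by
  refine Nat.card_congr ⟨fun p => ⟨p.1 ∘ₗ (e.symm : X' →ₗ[R] X),
      p.2.comp e.symm.injective⟩,
    fun p => ⟨p.1 ∘ₗ (e : X →ₗ[R] X'), p.2.comp e.injective⟩, ?_, ?_⟩
  · rintro ⟨g, hg⟩
    refine Subtype.ext (LinearMap.ext fun m => ?_)
    simp
  · rintro ⟨g, hg⟩
    refine Subtype.ext (LinearMap.ext fun m => ?_)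
    simp

lemma card_inj_eq_of_card_hom_eq {A B : Type v}
    [AddCommGroup A] [Module R A] [AddCommGroup B] [Module R B] [Finite A] [Finite B]
    (hAB : ∀ (X : Type v) [AddCommGroup X] [Module R X] [Finite X],
      Nat.card (X →ₗ[R] A) = Nat.card (X →ₗ[R] B)) :
    ∀ (n : ℕ) (X : Type v) [AddCommGroup X] [Module R X] [Finite X], Nat.card X ≤ n →
      Nat.card {g : X →ₗ[R] A // Function.Injective g}
        = Nat.card {g : X →ₗ[R] B // Function.Injective g} := by
  intro n
  induction n with
  | zero =>
    intro X _ _ _ hX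
    have : 0 < Nat.card X := Nat.card_pos
    omega
  | succ n ih =>
    intro X _ _ _ hX
    classical
    haveI : Finite (Submodule R X) :=
      Finite.of_injective (fun N : Submodule R X => (N : Set X)) SetLike.coe_injective
    haveI : Fintype (Submodule R X) := Fintype.ofFinite _
    haveI : ∀ N : Submodule R X, Finite (X ⧸ N) := fun N =>
      Finite.of_surjective _ N.mkQ_surjective
    have hcardlt : ∀ N : Submodule R X, N ≠ ⊥ → Nat.card (X ⧸ N) < Nat.card X := by
      intro N hN
      haveI : Fintype X := Fintype.ofFinite _
      haveI : Fintype (X ⧸ N) := Fintype.ofFinite _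
      rw [Nat.card_eq_fintype_card, Nat.card_eq_fintype_card]
      rcases lt_or_eq_of_le (Fintype.card_le_of_surjective _ N.mkQ_surjective) with h | h
      · exact h
      · exfalso
        have hbij : Function.Bijective N.mkQ :=
          (Fintype.bijective_iff_surjective_and_card _).2 ⟨N.mkQ_surjective, h.symm⟩
        have : N = ⊥ := by
          rw [← Submodule.ker_mkQ N]
          exact LinearMap.ker_eq_bot.2 hbij.injective
        exact hN this
    have hsum : ∑ N : Submodule R X, Nat.card {g : X ⧸ N →ₗ[R] A // Function.Injective g}
        = ∑ N : Submodule R X, Nat.card {g : X ⧸ N →ₗ[R] B // Function.Injective g} := by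
      rw [← card_hom_eq_sum X A, ← card_hom_eq_sum X B, hAB X]
    rw [← Finset.add_sum_erase _ _ (Finset.mem_univ (⊥ : Submodule R X)),
      ← Finset.add_sum_erase _ _ (Finset.mem_univ (⊥ : Submodule R X))] at hsum
    have herase : ∀ N ∈ Finset.univ.erase (⊥ : Submodule R X),
        Nat.card {g : X ⧸ N →ₗ[R] A // Function.Injective g}
          = Nat.card {g : X ⧸ N →ₗ[R] B // Function.Injective g} := by
      intro N hN
      have hNb : N ≠ ⊥ := Finset.ne_of_mem_erase hN
      exact ih (X ⧸ N) (by have := hcardlt N hNb; omega)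
    rw [Finset.sum_congr rfl herase] at hsum
    have hbot : Nat.card {g : X ⧸ (⊥ : Submodule R X) →ₗ[R] A // Function.Injective g}
        = Nat.card {g : X ⧸ (⊥ : Submodule R X) →ₗ[R] B // Function.Injective g} := by
      omega
    have e := Submodule.quotEquivOfEqBot (⊥ : Submodule R X) rfl
    rw [← card_inj_congr (A := A) e, ← card_inj_congr (A := B) e]
    exact hbot

lemma cancel_of_prod_equiv {A B M : Type v}
    [AddCommGroup A] [Module R A] [AddCommGroup B] [Module R B]
    [AddCommGroup M] [Module R M] [Finite A] [Finite B] [Finite M]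
    (e : (A × M) ≃ₗ[R] (B × M)) : Nonempty (A ≃ₗ[R] B) := by
  have key : ∀ (A' B' : Type v) [AddCommGroup A'] [Module R A'] [AddCommGroup B'] [Module R B']
      [Finite A'] [Finite B'], ((A' × M) ≃ₗ[R] (B' × M)) →
      Nonempty {g : A' →ₗ[R] B' // Function.Injective g} := by
    intro A' B' _ _ _ _ _ _ e'
    have hAB : ∀ (X : Type v) [AddCommGroup X] [Module R X] [Finite X],
        Nat.card (X →ₗ[R] A') = Nat.card (X →ₗ[R] B') := by
      intro X _ _ _
      haveI : Finite (X →ₗ[R] M) := finite_linearMap _ _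
      have hMpos : 0 < Nat.card (X →ₗ[R] M) := Nat.card_pos
      refine Nat.eq_of_mul_eq_mul_right hMpos ?_
      have h1 : ∀ (C : Type v) [AddCommGroup C] [Module R C],
          Nat.card (X →ₗ[R] C) * Nat.card (X →ₗ[R] M) = Nat.card (X →ₗ[R] C × M) := by
        intro C _ _
        rw [← Nat.card_prod]
        refine Nat.card_congr ⟨fun p => p.1.prod p.2,
          fun f => ⟨(LinearMap.fst R C M) ∘ₗ f, (LinearMap.snd R C M) ∘ₗ f⟩, ?_, ?_⟩
        · rintro ⟨f, g⟩; constructor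
        · intro f; refine LinearMap.ext fun m => ?_; rfl
      rw [h1 A', h1 B']
      refine Nat.card_congr ⟨fun f => (e' : (A' × M) →ₗ[R] (B' × M)) ∘ₗ f,
        fun f => (e'.symm : (B' × M) →ₗ[R] (A' × M)) ∘ₗ f, ?_, ?_⟩
      · intro f; refine LinearMap.ext fun m => ?_; simp
      · intro f; refine LinearMap.ext fun m => ?_; simp
    have h2 := card_inj_eq_of_card_hom_eq hAB (Nat.card A') A' le_rfl
    have hpos : 0 < Nat.card {g : A' →ₗ[R] A' // Function.Injective g} := by
      haveI : Finite (A' →ₗ[R] A') := finite_linearMap _ _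
      haveI : Nonempty {g : A' →ₗ[R] A' // Function.Injective g} :=
        ⟨⟨LinearMap.id, fun _ _ h => h⟩⟩
      exact Nat.card_pos
    rw [h2] at hpos
    haveI : Finite (A' →ₗ[R] B') := finite_linearMap _ _
    exact (Nat.card_pos_iff.1 hpos).1
  obtain ⟨f, hf⟩ := (key A B e).some
  obtain ⟨g, hg⟩ := (key B A e.symm).some
  have hgf : Function.Bijective (g ∘ₗ f : A →ₗ[R] A) :=
    Finite.injective_iff_bijective.1 (hg.comp hf)
  have hgsurj : Function.Surjective g := fun a => by
    obtain ⟨x, hx⟩ := hgf.2 a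
    exact ⟨f x, hx⟩
  exact ⟨(LinearEquiv.ofBijective g ⟨hg, hgsurj⟩).symm⟩

end Cancel

section SS
variable {R : Type u} [Ring R]

lemma semisimple_stable_range [Finite R] [IsSemisimpleRing R]
    (L : Submodule R R) (r s : R) (h : s * r - 1 ∈ L) :
    ∃ ℓ ∈ L, IsUnit (r + ℓ) := by
  classical
  set ρ : R →ₗ[R] R := LinearMap.toSpanSingleton R R r with hρ
  set Rr : Submodule R R := LinearMap.range ρ with hRr
  set K : Submodule R R := LinearMap.ker ρ with hK
  have hsr : s * r ∈ Rr := ⟨s, by simp [hρ, LinearMap.toSpanSingleton_apply, smul_eq_mul]⟩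
  have htop : Rr ⊔ L = ⊤ := by
    rw [Submodule.eq_top_iff']
    intro x
    have h1 : (1 : R) ∈ Rr ⊔ L := by
      have : (1 : R) = s * r - (s * r - 1) := (sub_sub_cancel _ _).symm
      rw [this]
      exact sub_mem (Submodule.mem_sup_left hsr) (Submodule.mem_sup_right h)
    have := Submodule.smul_mem (Rr ⊔ L) x h1
    simpa [smul_eq_mul] using this
  obtain ⟨C, hKC⟩ := exists_isCompl K
  obtain ⟨D0, hD0⟩ := exists_isCompl (Submodule.comap L.subtype (Rr ⊓ L))
  set D : Submodule R R := Submodule.map L.subtype D0 with hD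
  have hDL : D ≤ L := Submodule.map_subtype_le L D0
  have hmapcomap : Submodule.map L.subtype (Submodule.comap L.subtype (Rr ⊓ L)) = Rr ⊓ L := by
    rw [Submodule.map_comap_subtype]
    exact inf_eq_right.2 inf_le_right
  have hsub : (Rr ⊓ L) ⊔ D = L := by
    rw [← hmapcomap, hD, ← Submodule.map_sup, hD0.sup_eq_top, Submodule.map_top,
      Submodule.range_subtype]
  have hdisj : (Rr ⊓ L) ⊓ D = ⊥ := by
    rw [← hmapcomap, hD, ← Submodule.map_inf _ L.injective_subtype, hD0.inf_eq_bot,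
      Submodule.map_bot]
  have hRrD : IsCompl Rr D := by
    constructor
    · rw [disjoint_iff]
      have h1 : Rr ⊓ D = (Rr ⊓ L) ⊓ D := by
        rw [inf_assoc, inf_eq_right.2 hDL]
      rw [h1, hdisj]
    · rw [codisjoint_iff]
      have : Rr ⊔ L = Rr ⊔ ((Rr ⊓ L) ⊔ D) := by rw [hsub]
      have h2 : Rr ⊔ (Rr ⊓ L) = Rr := sup_eq_left.2 inf_le_left
      rw [← sup_assoc, h2] at this
      rw [← this, htop]
  have eC : (↥C) ≃ₗ[R] ↥Rr :=
    (Submodule.quotientEquivOfIsCompl K C hKC).symm.trans ρ.quotKerEquivRange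
  have E : ((↥K) × ↥Rr) ≃ₗ[R] ((↥D) × ↥Rr) :=
    ((LinearEquiv.refl R ↥K).prodCongr eC.symm).trans
      ((Submodule.prodEquivOfIsCompl K C hKC).trans
        (((Submodule.prodEquivOfIsCompl Rr D hRrD).symm).trans
          (LinearEquiv.prodComm R ↥Rr ↥D)))
  obtain ⟨θ⟩ := cancel_of_prod_equiv E
  set ψ : R →ₗ[R] R :=
    D.subtype ∘ₗ (θ : ↥K →ₗ[R] ↥D) ∘ₗ (K.linearProjOfIsCompl C hKC) with hψ
  have hmemD : ∀ m : R, ψ m ∈ D := fun m => SetLike.coe_mem _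
  set ℓ : R := ψ 1 with hℓ
  have hlL : ℓ ∈ L := hDL (hmemD 1)
  set φ : R →ₗ[R] R := ρ + ψ with hφ
  have hφap : ∀ m : R, φ m = m * (r + ℓ) := by
    intro m
    have h1 : ρ m = m * r := by simp [hρ, LinearMap.toSpanSingleton_apply, smul_eq_mul]
    have h2 : ψ m = m * ℓ := by
      conv_lhs => rw [show m = m • (1 : R) by simp [smul_eq_mul]]
      rw [map_smul, smul_eq_mul, hℓ]
    simp [hφ, h1, h2, mul_add]
  have hker : LinearMap.ker φ = ⊥ := by
    rw [eq_bot_iff]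
    intro m hm
    have hm0 : ρ m + ψ m = 0 := hm
    have hρD : ρ m ∈ Rr ⊓ D := by
      constructor
      · exact ⟨m, rfl⟩
      · have : ρ m = -ψ m := eq_neg_of_add_eq_zero_left hm0
        rw [this]
        exact neg_mem (hmemD m)
    have hRrDbot : Rr ⊓ D = ⊥ := disjoint_iff.1 hRrD.disjoint
    have hρ0 : ρ m = 0 := by
      have := hRrDbot ▸ hρD
      simpa using this
    have hψ0 : ψ m = 0 := by
      have := hm0
      rw [hρ0, zero_add] at this
      exact this
    have hmK : m ∈ K := hρ0
    have hproj : (K.linearProjOfIsCompl C hKC) m = ⟨m, hmK⟩ := by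
      have := Submodule.linearProjOfIsCompl_apply_left hKC ⟨m, hmK⟩
      exact this
    have hθ0 : θ ((K.linearProjOfIsCompl C hKC) m) = 0 := by
      have : (↑(θ ((K.linearProjOfIsCompl C hKC) m)) : R) = 0 := hψ0
      exact_mod_cast Submodule.coe_eq_zero.1 this
    rw [hproj] at hθ0
    have : (⟨m, hmK⟩ : ↥K) = 0 := θ.injective (by simpa using hθ0)
    simpa using congrArg (fun x : ↥K => (x : R)) this
  have hinj : Function.Injective φ := LinearMap.ker_eq_bot.1 hker
  have hinj' : Function.Injective (fun m : R => m * (r + ℓ)) := by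
    intro m₁ m₂ hmm
    apply hinj
    rw [hφap, hφap]
    exact hmm
  have hsurj := Finite.injective_iff_surjective.1 hinj'
  obtain ⟨v, hv⟩ := hsurj 1
  exact ⟨ℓ, hlL, finUnit_of_mul_eq_one_left hv⟩

end SS

section JPart
variable {R : Type u} [Ring R]

/-- Membership in the Jacobson-radical-like set. -/
def JMem (z : R) : Prop := ∀ y : R, IsUnit (1 + y * z)

lemma JMem.zero : JMem (0 : R) := fun y => by simp

lemma JMem.add {z₁ z₂ : R} (h₁ : JMem z₁) (h₂ : JMem z₂) : JMem (z₁ + z₂) := by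
  intro y
  set w := (h₁ y).unit with hw
  have hwv : (w : R) = 1 + y * z₁ := (h₁ y).unit_spec
  have key : 1 + y * (z₁ + z₂) = (w : R) * (1 + (↑w⁻¹ * y) * z₂) := by
    have : (w : R) * (1 + (↑w⁻¹ * y) * z₂) = (w : R) + (w : R) * ((↑w⁻¹ : R) * (y * z₂)) := by
      rw [mul_add, mul_one, mul_assoc]
    rw [this, Units.mul_inv_cancel_left, hwv, mul_add, add_assoc]
  rw [key]
  exact (Units.isUnit w).mul (h₂ (↑w⁻¹ * y))

lemma JMem.neg {z : R} (h : JMem z) : JMem (-z) := by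
  intro y
  have := h (-y)
  rwa [neg_mul, ← mul_neg] at this

lemma JMem.mul_left (t : R) {z : R} (h : JMem z) : JMem (t * z) := by
  intro y
  have := h (y * t)
  rwa [mul_assoc] at this

lemma JMem.mul_right (t : R) {z : R} (h : JMem z) : JMem (z * t) := by
  intro y
  have h1 := isUnit_one_add_swap (h (t * y))
  have h2 : IsUnit (1 + z * t * y) := by rwa [mul_assoc]
  exact isUnit_one_add_swap h2

/-- The congruence relation identifying elements differing by a `JMem` element. -/
def jcon (R : Type u) [Ring R] : RingCon R where
  r a b := JMem (a - b)
  iseqv := by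
    refine ⟨fun a => by simpa using JMem.zero, fun {a b} h => ?_, fun {a b c} h₁ h₂ => ?_⟩
    · have := h.neg; rwa [neg_sub] at this
    · have := h₁.add h₂; rwa [sub_add_sub_cancel] at this
  add' := by
    intro a b c d h₁ h₂
    have := h₁.add h₂
    rwa [show a - b + (c - d) = a + c - (b + d) by noncomm_ring] at this
  mul' := by
    intro a b c d h₁ h₂
    have := (h₂.mul_left a).add (h₁.mul_right d)
    rwa [show a * (c - d) + (a - b) * d = a * c - b * d by noncomm_ring] at this

/-- If the Jacobson-radical-like set is trivial, a finite ring is semisimple. -/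
lemma semisimple_of_JMem_trivial [Finite R] (hz : ∀ z : R, JMem z → z = 0) :
    IsSemisimpleRing R := by
  classical
  haveI : Finite (Submodule R R) :=
    Finite.of_injective (fun N : Submodule R R => (N : Set R)) SetLike.coe_injective
  haveI : Fintype (Submodule R R) := Fintype.ofFinite _
  refine { toComplementedLattice := ⟨fun N => ?_⟩ }
  set T : Finset (Submodule R R) := Finset.univ.filter (fun N' => N ⊔ N' = ⊤) with hT
  have hTne : T.Nonempty := ⟨⊤, by simp [hT]⟩
  obtain ⟨N', hN'T, hmin⟩ := T.exists_minimal hTne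
  have hN'top : N ⊔ N' = ⊤ := by
    have := hN'T; rw [hT, Finset.mem_filter] at this; exact this.2
  refine ⟨N', ?_, codisjoint_iff.2 hN'top⟩
  rw [disjoint_iff]
  by_contra hbot
  obtain ⟨x, hxK, hx0⟩ := Submodule.exists_mem_ne_zero_of_ne_bot hbot
  have hxJ : ¬ JMem x := fun hJ => hx0 (hz x hJ)
  rw [JMem] at hxJ; push_neg at hxJ
  obtain ⟨y, hy⟩ := hxJ
  set g : R := 1 + y * x with hg
  have hspan : Submodule.span R {g} ≠ ⊤ := by
    intro htop2
    have h1 : (1 : R) ∈ Submodule.span R {g} := by rw [htop2]; exact Submodule.mem_top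
    obtain ⟨a, ha⟩ := Submodule.mem_span_singleton.1 h1
    rw [smul_eq_mul] at ha
    exact hy (finUnit_of_mul_eq_one_left ha)
  rcases eq_top_or_exists_le_coatom (Submodule.span R {g}) with h' | ⟨m, hm, hle⟩
  · exact hspan h'
  have hgm : g ∈ m := hle (Submodule.mem_span_singleton_self g)
  have hyxm : y * x ∉ m := by
    intro hmem
    have h1m : (1 : R) ∈ m := by
      have := m.sub_mem hgm hmem
      rwa [hg, add_sub_cancel_right] at this
    have : m = ⊤ := by
      rw [Submodule.eq_top_iff']
      intro a
      have := m.smul_mem a h1m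
      simpa [smul_eq_mul] using this
    exact hm.1 this
  have hKnotle : ¬(N ⊓ N' ≤ m) := by
    intro hle2
    exact hyxm (hle2 (by simpa [smul_eq_mul] using Submodule.smul_mem _ y hxK))
  have hsupm : m ⊔ (N ⊓ N') = ⊤ := by
    have hlt : m < m ⊔ (N ⊓ N') := left_lt_sup.2 hKnotle
    exact hm.2 _ hlt
  have hmod : (N ⊓ N') ⊔ (m ⊓ N') = N' := by
    have := sup_inf_assoc_of_le (x := N ⊓ N') (y := m) (z := N') inf_le_right
    rw [sup_comm (N ⊓ N') m, hsupm, top_inf_eq] at this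
    exact this.symm
  have hT2 : N ⊔ (m ⊓ N') = ⊤ := by
    have hNN : N ⊔ (N ⊓ N') = N := sup_eq_left.2 inf_le_left
    calc N ⊔ (m ⊓ N') = (N ⊔ (N ⊓ N')) ⊔ (m ⊓ N') := by rw [hNN]
      _ = N ⊔ ((N ⊓ N') ⊔ (m ⊓ N')) := sup_assoc _ _ _
      _ = N ⊔ N' := by rw [hmod]
      _ = ⊤ := hN'top
  have hlt2 : m ⊓ N' < N' := by
    refine lt_of_le_of_ne inf_le_right ?_
    intro heq
    exact hKnotle (le_trans inf_le_right (inf_eq_right.1 heq))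
  exact absurd (hmin (y := m ⊓ N') (by beta_reduce; rw [hT, Finset.mem_filter]; exact ⟨Finset.mem_univ _, hT2⟩) hlt2.le) hlt2.not_ge

end JPart

section Main

/-- Finite rings have (left) stable range one. -/
lemma stable_range_fin : ∀ (n : ℕ) (R : Type u) [Ring R] [Finite R]
    (L : Submodule R R) (r s : R), Nat.card R ≤ n → s * r - 1 ∈ L →
    ∃ ℓ ∈ L, IsUnit (r + ℓ) := by
  intro n
  induction n with
  | zero =>
    intro R _ _ L r s hcard hmem
    have : 0 < Nat.card R := Nat.card_pos
    omega
  | succ n ih =>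
    intro R _ _ L r s hcard hmem
    by_cases hss : IsSemisimpleRing R
    · exact semisimple_stable_range L r s hmem
    · have hzJ : ∃ z : R, z ≠ 0 ∧ JMem z := by
        by_contra hcon
        push_neg at hcon
        refine hss (semisimple_of_JMem_trivial fun z hJ => ?_)
        by_contra h0
        exact (hcon z h0) hJ
      obtain ⟨z₀, hz₀ne, hz₀J⟩ := hzJ
      set c := jcon R with hc
      have hsurj : Function.Surjective (fun a : R => (a : c.Quotient)) := fun q =>
        Quotient.inductionOn' q fun a => ⟨a, rfl⟩
      haveI : Finite c.Quotient := Quotient.finite _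
      have hz00 : ((z₀ : c.Quotient)) = ((0 : R) : c.Quotient) := by
        rw [RingCon.eq]
        show JMem (z₀ - 0)
        rwa [sub_zero]
      have hcardS : Nat.card c.Quotient < Nat.card R := by
        rcases lt_or_eq_of_le (Nat.card_le_card_of_surjective _ hsurj) with h | h
        · exact h
        · exfalso
          have hbij : Function.Bijective (fun a : R => (a : c.Quotient)) :=
            (Nat.bijective_iff_surjective_and_card _).2 ⟨hsurj, h.symm⟩
          exact hz₀ne (by simpa using hbij.1 hz00)
      set L' : Submodule c.Quotient c.Quotient :=
        { carrier := (fun a : R => (a : c.Quotient)) '' (L : Set R)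
          add_mem' := by
            rintro _ _ ⟨a, ha, rfl⟩ ⟨b, hb, rfl⟩
            exact ⟨a + b, L.add_mem ha hb, by simp⟩
          zero_mem' := ⟨0, L.zero_mem, by simp⟩
          smul_mem' := by
            rintro t _ ⟨a, ha, rfl⟩
            obtain ⟨tt, rfl⟩ := hsurj t
            refine ⟨tt * a, L.smul_mem tt ha, ?_⟩
            show ((tt * a : R) : c.Quotient) = _
            rw [RingCon.coe_mul]
            rfl } with hL'
      have hmem' : ((s : c.Quotient)) * ((r : c.Quotient)) - 1 ∈ L' := by
        refine ⟨s * r - 1, hmem, ?_⟩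
        show ((s * r - 1 : R) : c.Quotient) = _
        rw [RingCon.coe_sub, RingCon.coe_mul, RingCon.coe_one]
      obtain ⟨ℓ', hℓ'mem, hunit'⟩ := ih c.Quotient L' (r : c.Quotient) (s : c.Quotient)
        (by omega) hmem'
      obtain ⟨ℓ, hℓL, rfl⟩ := hℓ'mem
      refine ⟨ℓ, hℓL, ?_⟩
      set v : R := r + ℓ with hv
      have hu : IsUnit ((v : R) : c.Quotient) := by
        rw [hv, RingCon.coe_add]; exact hunit'
      obtain ⟨u, hu'⟩ := hu
      obtain ⟨w, hw⟩ := hsurj ((u⁻¹ : c.Quotientˣ) : c.Quotient)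
      have hw' : ((w : R) : c.Quotient) = ((u⁻¹ : c.Quotientˣ) : c.Quotient) := hw
      have hvw1 : ((v * w : R) : c.Quotient) = ((1 : R) : c.Quotient) := by
        rw [RingCon.coe_mul, RingCon.coe_one, ← hu', hw']
        exact u.mul_inv
      have hwv1 : ((w * v : R) : c.Quotient) = ((1 : R) : c.Quotient) := by
        rw [RingCon.coe_mul, RingCon.coe_one, ← hu', hw']
        exact u.inv_mul
      have hJwv : JMem (w * v - 1) := by
        have := (RingCon.eq (c := c)).1 hwv1
        exact this
      have hunit_wv : IsUnit (w * v) := by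
        have := hJwv 1
        rwa [one_mul, add_comm, sub_add_cancel] at this
      obtain ⟨q, hq⟩ := hunit_wv
      have hqinv : ((q⁻¹ : Rˣ) : R) * (w * v) = 1 := by rw [← hq]; exact q.inv_mul
      have : (((q⁻¹ : Rˣ) : R) * w) * v = 1 := by rw [mul_assoc]; exact hqinv
      exact finUnit_of_mul_eq_one_left this

end Main

end WeightAux

/-- A weight on a finite ring whose left symmetry group is all of `R^×` is
constant on generating sets of principal left ideals. -/
theorem left_invariant_weight_constant_on_associates {R : Type*} [Ring R] [Fintype R]
    (w : R → ℂ) (hw0 : w 0 = 0)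
    (hsym : ∀ u : Rˣ, ∀ x : R, w ((u : R) * x) = w x)
    (x y : R) (h : Ideal.span ({x} : Set R) = Ideal.span ({y} : Set R)) :
    w x = w y := by
  have hy : y ∈ Ideal.span ({x} : Set R) := by
    rw [h]; exact Ideal.subset_span rfl
  have hx : x ∈ Ideal.span ({y} : Set R) := by
    rw [← h]; exact Ideal.subset_span rfl
  obtain ⟨a, ha⟩ := Submodule.mem_span_singleton.1 hy
  obtain ⟨b, hb⟩ := Submodule.mem_span_singleton.1 hx
  rw [smul_eq_mul] at ha hb
  set L : Submodule R R := LinearMap.ker (LinearMap.toSpanSingleton R R x) with hL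
  have hmem : b * a - 1 ∈ L := by
    show (b * a - 1) • x = 0
    rw [sub_smul, smul_eq_mul, one_smul, mul_assoc, ha, hb, sub_self]
  obtain ⟨ℓ, hℓL, hunit⟩ := WeightAux.stable_range_fin (Nat.card R) R L a b le_rfl hmem
  have hux : (a + ℓ) * x = y := by
    have hℓx : ℓ * x = 0 := by
      have : ℓ • x = 0 := hℓL
      rwa [smul_eq_mul] at this
    rw [add_mul, hℓx, add_zero, ha]
  have := hsym hunit.unit x
  rw [IsUnit.unit_spec, hux] at this
  exact this.symm
end

section
/- Let W = {w : R → ℂ : w(0)=0 and w(ux)=w(x)=w(xu) for all x ∈ R, u ∈ R^×} be the invariant weights and S = {f : R → ℂ : f(xu)=f(x) for all x, u ∈ R^×} modulo ℂδ_0. Then W is a right S-module under the correlation (w ⊛ f)(x) = ∑_r w(rx) f(r); in particular w ⊛ f ∈ W whenever w ∈ W and f is right-invariant. -/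
open Finset

/-- Right correlation `(w ⊛ f)(x) = ∑_r w(rx) f(r)`. -/
noncomputable def corr {R : Type*} [Fintype R] [Ring R] (w f : R → ℂ) : R → ℂ :=
  fun x => ∑ r : R, w (r * x) * f r

/-- The invariant weights form a right module over the right-invariant
functions under correlation: if `w` is an invariant weight and `f` is
right-invariant, then `w ⊛ f` is again an invariant weight. -/
theorem invariant_weights_right_module {R : Type*} [Fintype R] [Ring R]
    (w f : R → ℂ) (hw0 : w 0 = 0)
    (hwl : ∀ (u : Rˣ) (x : R), w ((u : R) * x) = w x)
    (hwr : ∀ (u : Rˣ) (x : R), w (x * (u : R)) = w x)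
    (hf : ∀ (u : Rˣ) (x : R), f (x * (u : R)) = f x) :
    corr w f 0 = 0 ∧
    (∀ (u : Rˣ) (x : R), corr w f ((u : R) * x) = corr w f x) ∧
    (∀ (u : Rˣ) (x : R), corr w f (x * (u : R)) = corr w f x) := by
  refine ⟨?_, ?_, ?_⟩
  · simp [corr, hw0]
  · intro u x
    unfold corr
    rw [← Equiv.sum_comp (Units.mulRight u).symm (fun r => w (r * ((u : R) * x)) * f r)]
    refine Finset.sum_congr rfl fun r _ => ?_
    simp only [Units.mulRight_symm, Units.mulRight_apply]
    rw [mul_assoc, Units.inv_mul_cancel_left, hf u⁻¹ r]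
  · intro u x
    unfold corr
    refine Finset.sum_congr rfl fun r _ => ?_
    rw [← mul_assoc, hwr]
end

section
/- Let R = R₁ × ... × R_r be a finite product of finite chain rings, E the set of ideal representatives, w an invariant weight on R (w(0)=0, w(ux)=w(xu)=w(x) for units u), and for x ∈ E define e^⊥ by (Re)^⊥ = {r : rRe = 0} and η_x = ∑_{x^⊥ ≤ t} μ(0, Rxt) ε_t, where ε_t = |R^× t|^{-1} ∑_{a ∈ R^× t} δ_a. Then (w ⊛ η_x)(y) = ∑_{x^⊥ ≤ t} μ(0, Rxt) w(ty) if Rx ≤ Ry, and (w ⊛ η_x)(y) = 0 if Rx ≰ Ry. -/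
open Finset
open scoped Classical

/-- The element `p₁^{t₁} ⋯ p_r^{t_r}` of a product ring. -/
def pelt {r : ℕ} {R : Fin r → Type*} [∀ i, Monoid (R i)]
    (p : ∀ i, R i) (t : Fin r → ℕ) : ∀ i, R i :=
  fun i => p i ^ t i

/-- `ε_t = |R^× t|⁻¹ δ_{R^× t}`, the normalised indicator of the orbit
`R^× t` of the element `t = p₁^{t₁} ⋯ p_r^{t_r}`. -/
noncomputable def eps {r : ℕ} {R : Fin r → Type*} [∀ i, Monoid (R i)]
    (p : ∀ i, R i) (t : Fin r → ℕ) : (∀ i, R i) → ℂ :=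
  fun a =>
    if ∃ u : (∀ i, R i)ˣ, a = (u : ∀ i, R i) * pelt p t then
      ((Nat.card {b : ∀ i, R i // ∃ u : (∀ i, R i)ˣ,
        b = (u : ∀ i, R i) * pelt p t} : ℂ))⁻¹
    else 0

/-- `η_x = ∑_{x^⊥ ≤ t} μ(0, Rxt) ε_t`, where the condition `x^⊥ ≤ t`
(inclusion `R x^⊥ ≤ R t` of principal ideals) amounts to
`tᵢ ≤ dᵢ - xᵢ` for all `i`. -/
noncomputable def eta {r : ℕ} {R : Fin r → Type*} [∀ i, Ring (R i)]
    (p : ∀ i, R i) (d x : Fin r → ℕ)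
    (μ : Ideal (∀ i, R i) → Ideal (∀ i, R i) → ℂ) : (∀ i, R i) → ℂ :=
  fun a => ∑ t : ∀ i, Fin (d i + 1),
    if ∀ i, (t i : ℕ) ≤ d i - x i then
      μ ⊥ (Ideal.span {pelt p x * pelt p (fun i => (t i : ℕ))}) *
        eps p (fun i => (t i : ℕ)) a
    else 0


set_option linter.unusedSectionVars false
set_option linter.unusedVariables false
set_option maxHeartbeats 1000000

section ChainRing
variable {S : Type*} [Ring S] [Fintype S] [Nontrivial S]

lemma isUnit_of_left_inv {a r : S} (h : r * a = 1) : IsUnit a := by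
  have hinj : Function.Injective (fun x : S => a * x) := by
    intro x y hxy
    have : r * (a * x) = r * (a * y) := by
      simp only [] at hxy; rw [hxy]
    simpa [← mul_assoc, h] using this
  obtain ⟨s, hs⟩ := Finite.injective_iff_surjective.mp hinj (1 : S)
  simp only [] at hs
  have hr : r = s := by
    have : r * (a * s) = r := by rw [hs, mul_one]
    rw [← mul_assoc, h, one_mul] at this
    exact this.symm
  exact ⟨⟨a, s, hs, hr ▸ h⟩, rfl⟩

lemma isUnit_of_right_inv {a s : S} (h : a * s = 1) : IsUnit a := by
  have hinj : Function.Injective (fun x : S => x * a) := by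
    intro x y hxy
    have : x * a * s = y * a * s := by
      simpa using congrArg (· * s) hxy
    simpa [mul_assoc, h] using this
  obtain ⟨t, ht⟩ := Finite.injective_iff_surjective.mp hinj (1 : S)
  simp only [] at ht
  have hs : s = t := by
    have : t * (a * s) = t := by rw [h, mul_one]
    rw [← mul_assoc, ht, one_mul] at this
    exact this
  exact ⟨⟨a, s, h, hs ▸ ht⟩, rfl⟩

variable {p : S}

lemma span_p_ne_top (hchain : ∀ I J : Ideal S, I ≤ J ∨ J ≤ I)
    (hp : Ideal.span {p} = Ideal.jacobson ⊥) : Ideal.span {p} ≠ ⊤ := by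
  obtain ⟨M, hM, -⟩ := Ideal.exists_le_maximal (⊥ : Ideal S) bot_ne_top
  have h1 : Ideal.span {p} ≤ M := by
    rw [hp, Ideal.jacobson]
    exact sInf_le ⟨bot_le, hM⟩
  intro htop
  exact hM.ne_top (top_le_iff.mp (htop ▸ h1))

lemma isUnit_of_not_mem (hchain : ∀ I J : Ideal S, I ≤ J ∨ J ≤ I)
    (hp : Ideal.span {p} = Ideal.jacobson ⊥) {a : S}
    (ha : a ∉ Ideal.span {p}) : IsUnit a := by
  rw [hp, Ideal.jacobson, Submodule.mem_sInf] at ha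
  push_neg at ha
  obtain ⟨M, ⟨-, hM⟩, haM⟩ := ha
  by_cases htop : Ideal.span {a} = ⊤
  · have h1 : (1 : S) ∈ Ideal.span ({a} : Set S) := htop ▸ Submodule.mem_top
    obtain ⟨r, hr⟩ := Submodule.mem_span_singleton.mp h1
    exact isUnit_of_left_inv (by simpa using hr)
  · obtain ⟨M', hM', hle⟩ := Ideal.exists_le_maximal _ htop
    have hMM' : M = M' := by
      rcases hchain M M' with h | h
      · exact hM.eq_of_le hM'.ne_top h
      · exact (hM'.eq_of_le hM.ne_top h).symm
    exact absurd (hMM' ▸ hle (Ideal.mem_span_singleton_self a)) haM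

lemma mem_span_p_of_not_isUnit (hchain : ∀ I J : Ideal S, I ≤ J ∨ J ≤ I)
    (hp : Ideal.span {p} = Ideal.jacobson ⊥) {a : S}
    (ha : ¬ IsUnit a) : a ∈ Ideal.span {p} := by
  by_contra h
  exact ha (isUnit_of_not_mem hchain hp h)

lemma p_mul_mem (hchain : ∀ I J : Ideal S, I ≤ J ∨ J ≤ I)
    (hp : Ideal.span {p} = Ideal.jacobson ⊥) (s : S) :
    p * s ∈ Ideal.span {p} := by
  apply mem_span_p_of_not_isUnit hchain hp
  intro h
  obtain ⟨u, hu⟩ := h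
  have : IsUnit p := isUnit_of_right_inv (a := p) (s := s * ↑u⁻¹) (by
    rw [← mul_assoc, ← hu]
    exact u.mul_inv)
  obtain ⟨v, hv⟩ := this
  apply span_p_ne_top hchain hp
  rw [Ideal.eq_top_iff_one]
  exact Submodule.mem_span_singleton.mpr ⟨↑v⁻¹, by rw [smul_eq_mul, ← hv]; exact v.inv_mul⟩

lemma pow_mul_mem (hchain : ∀ I J : Ideal S, I ≤ J ∨ J ≤ I)
    (hp : Ideal.span {p} = Ideal.jacobson ⊥) (k : ℕ) (s : S) :
    ∃ t : S, p ^ k * s = t * p ^ k := by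
  induction k generalizing s with
  | zero => exact ⟨s, by simp⟩
  | succ n ih =>
    obtain ⟨r, hr⟩ := Submodule.mem_span_singleton.mp (p_mul_mem hchain hp s)
    rw [smul_eq_mul] at hr
    obtain ⟨t, ht⟩ := ih r
    refine ⟨t, ?_⟩
    calc p ^ (n+1) * s = p ^ n * (p * s) := by rw [pow_succ, mul_assoc]
    _ = p ^ n * (r * p) := by rw [hr]
    _ = (p ^ n * r) * p := by rw [mul_assoc]
    _ = (t * p ^ n) * p := by rw [ht]
    _ = t * p ^ (n+1) := by rw [mul_assoc, ← pow_succ]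

lemma span_pow_mul_mem (hchain : ∀ I J : Ideal S, I ≤ J ∨ J ≤ I)
    (hp : Ideal.span {p} = Ideal.jacobson ⊥) (k : ℕ) {a : S}
    (ha : a ∈ Ideal.span {p ^ k}) (s : S) : a * s ∈ Ideal.span {p ^ k} := by
  obtain ⟨r, hr⟩ := Submodule.mem_span_singleton.mp ha
  rw [smul_eq_mul] at hr
  obtain ⟨t, ht⟩ := pow_mul_mem hchain hp k s
  refine Submodule.mem_span_singleton.mpr ⟨r * t, ?_⟩
  rw [smul_eq_mul, ← hr, mul_assoc, mul_assoc, ← ht]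


variable (hchain : ∀ I J : Ideal S, I ≤ J ∨ J ≤ I)
  (hp : Ideal.span {p} = Ideal.jacobson ⊥)
  {d : ℕ} (hd : p ^ d = 0) (hdmin : ∀ m : ℕ, p ^ m = 0 → d ≤ m)

include hchain hp hd hdmin


lemma pow_not_mem_succ {k : ℕ} (hk : k < d) :
    p ^ k ∉ Ideal.span {p ^ (k + 1)} := by
  intro hmem
  obtain ⟨r, hr⟩ := Submodule.mem_span_singleton.mp hmem
  rw [smul_eq_mul] at hr
  have h1 : (1 - r * p) * p ^ k = 0 := by
    rw [sub_mul, one_mul, mul_assoc, ← pow_succ', hr, sub_self]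
  have hrp : r * p ∈ Ideal.span {p} :=
    Submodule.mem_span_singleton.mpr ⟨r, rfl⟩
  have hu : IsUnit (1 - r * p) := by
    apply isUnit_of_not_mem hchain hp
    intro hmem'
    apply span_p_ne_top hchain hp
    rw [Ideal.eq_top_iff_one]
    have : (1 : S) = (1 - r * p) + r * p := (sub_add_cancel _ _).symm
    rw [this]
    exact Submodule.add_mem _ hmem' hrp
  obtain ⟨u, hu⟩ := hu
  have : p ^ k = 0 := by
    have h2 : (↑u⁻¹ : S) * ((1 - r * p) * p ^ k) = p ^ k := by
      rw [← mul_assoc, ← hu, u.inv_mul, one_mul]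
    rw [h1, mul_zero] at h2
    exact h2.symm
  exact absurd (hdmin _ this) (by omega)

lemma norm_form {k : ℕ} (hk : k < d) {a : S}
    (ha : a ∈ Ideal.span {p ^ k}) (ha' : a ∉ Ideal.span {p ^ (k + 1)}) :
    ∃ u : Sˣ, a = ↑u * p ^ k := by
  obtain ⟨r, hr⟩ := Submodule.mem_span_singleton.mp ha
  rw [smul_eq_mul] at hr
  have hrp : r ∉ Ideal.span {p} := by
    intro hmem
    obtain ⟨s, hs⟩ := Submodule.mem_span_singleton.mp hmem
    rw [smul_eq_mul] at hs
    apply ha'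
    refine Submodule.mem_span_singleton.mpr ⟨s, ?_⟩
    rw [smul_eq_mul, ← hr, ← hs, pow_succ', mul_assoc]
  obtain ⟨u, hu⟩ := isUnit_of_not_mem hchain hp hrp
  exact ⟨u, by rw [hu, hr]⟩

lemma d_pos : 0 < d := by
  rcases Nat.eq_zero_or_pos d with h | h
  · exfalso; rw [h, pow_zero] at hd; exact one_ne_zero hd
  · exact h

lemma span_pow_d : Ideal.span {p ^ d} = (⊥ : Ideal S) := by
  rw [hd]
  simp

lemma elt_class (a : S) : ∃ k ≤ d, ∃ u : Sˣ, a = ↑u * p ^ k := by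
  by_cases h0 : a = 0
  · exact ⟨d, le_refl d, 1, by simp [h0, hd]⟩
  · set P : ℕ → Prop := fun m => a ∈ Ideal.span {p ^ m} with hP
    set k := Nat.findGreatest P d with hkdef
    have hk_le : k ≤ d := Nat.findGreatest_le d
    have hP0 : P 0 := by
      simp [hP, Ideal.span_singleton_one]
    have hPk : P k := Nat.findGreatest_spec (Nat.zero_le d) hP0
    have hkd : k < d := by
      rcases lt_or_eq_of_le hk_le with h | h
      · exact h
      · exfalso
        apply h0
        have := hPk
        rw [hP] at this
        rw [h] at this
        rw [span_pow_d hchain hp hd hdmin] at this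
        simpa using this
    have hnk : ¬ P (k + 1) := Nat.findGreatest_is_greatest (k := k+1) (P := P) (n := d) (by omega) (by omega)
    obtain ⟨u, hu⟩ := norm_form hchain hp hd hdmin hkd hPk hnk
    exact ⟨k, hk_le, u, hu⟩

lemma ideal_class (I : Ideal S) : ∃ k ≤ d, I = Ideal.span {p ^ k} := by
  set P : ℕ → Prop := fun m => I ≤ Ideal.span {p ^ m} with hP
  set k := Nat.findGreatest P d with hkdef
  have hk_le : k ≤ d := Nat.findGreatest_le d
  have hP0 : P 0 := by simp [hP, Ideal.span_singleton_one]
  have hPk : P k := Nat.findGreatest_spec (Nat.zero_le d) hP0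
  rcases lt_or_eq_of_le hk_le with hkd | hkd
  · have hnk : ¬ P (k + 1) := Nat.findGreatest_is_greatest (k := k+1) (P := P) (n := d) (by omega) (by omega)
    rw [hP] at hnk
    push_neg at hnk
    obtain ⟨a, haI, ha'⟩ := SetLike.not_le_iff_exists.mp hnk
    obtain ⟨u, hu⟩ := norm_form hchain hp hd hdmin hkd (hPk haI) ha'
    refine ⟨k, hk_le, le_antisymm hPk ?_⟩
    rw [Ideal.span_le]
    intro z hz
    rcases hz with rfl
    have : p ^ k = ↑u⁻¹ * a := by
      rw [hu, ← mul_assoc, u.inv_mul, one_mul]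
    rw [this]
    exact Ideal.mul_mem_left _ _ haI
  · refine ⟨d, le_refl d, ?_⟩
    have h1 : I ≤ Ideal.span {p ^ d} := hkd ▸ hPk
    rw [span_pow_d hchain hp hd hdmin] at h1 ⊢
    exact le_bot_iff.mp h1

lemma span_pow_le_span_pow {k m : ℕ} (hm : m ≤ d) :
    Ideal.span {p ^ k} ≤ Ideal.span ({p ^ m} : Set S) ↔ m ≤ k ∨ d ≤ k := by
  constructor
  · intro hle
    by_contra hcon
    push_neg at hcon
    obtain ⟨hmk, hdk⟩ := hcon
    have h1 : p ^ k ∈ Ideal.span ({p ^ m} : Set S) := hle (Ideal.mem_span_singleton_self _)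
    have h2 : Ideal.span ({p ^ m} : Set S) ≤ Ideal.span ({p ^ (k+1)} : Set S) := by
      rw [Ideal.span_le]
      intro z hz
      rcases hz with rfl
      refine Submodule.mem_span_singleton.mpr ⟨p ^ (m - (k+1)), ?_⟩
      rw [smul_eq_mul, ← pow_add]
      congr 1
      omega
    exact pow_not_mem_succ hchain hp hd hdmin hdk (h2 h1)
  · intro h
    rcases h with h | h
    · refine Ideal.span_le.mpr ?_
      intro z hz
      rcases hz with rfl
      refine Submodule.mem_span_singleton.mpr ⟨p ^ (k - m), ?_⟩
      rw [smul_eq_mul, ← pow_add]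
      congr 1
      omega
    · have : p ^ k = 0 := by
        have : p ^ k = p ^ d * p ^ (k - d) := by rw [← pow_add]; congr 1; omega
        rw [this, hd, zero_mul]
      rw [this]
      refine Ideal.span_le.mpr ?_
      intro z hz
      simp only [Set.mem_singleton_iff] at hz
      subst hz
      exact Submodule.zero_mem _

lemma span_pow_le_span_pow' {k m : ℕ} (hk : k ≤ d) (hm : m ≤ d) :
    Ideal.span {p ^ k} ≤ Ideal.span ({p ^ m} : Set S) ↔ m ≤ k := by
  rw [span_pow_le_span_pow hchain hp hd hdmin hm]
  omega

lemma span_pow_inj {k m : ℕ} (hk : k ≤ d) (hm : m ≤ d)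
    (h : Ideal.span ({p ^ k} : Set S) = Ideal.span ({p ^ m} : Set S)) : k = m := by
  have h1 := (span_pow_le_span_pow' hchain hp hd hdmin hk hm).mp h.le
  have h2 := (span_pow_le_span_pow' hchain hp hd hdmin hm hk).mp h.ge
  omega

lemma unit_transfer (k : ℕ) (u : Sˣ) : ∃ u' : Sˣ, p ^ k * ↑u = ↑u' * p ^ k := by
  by_cases hk : k < d
  · have ha : p ^ k * ↑u ∈ Ideal.span {p ^ k} :=
      span_pow_mul_mem hchain hp k (Ideal.mem_span_singleton_self _) _
    have ha' : p ^ k * ↑u ∉ Ideal.span {p ^ (k+1)} := by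
      intro hmem
      apply pow_not_mem_succ hchain hp hd hdmin hk
      have : (p ^ k * ↑u) * ↑u⁻¹ ∈ Ideal.span {p ^ (k+1)} :=
        span_pow_mul_mem hchain hp (k+1) hmem _
      rwa [mul_assoc, u.mul_inv, mul_one] at this
    exact norm_form hchain hp hd hdmin hk ha ha'
  · have : p ^ k = 0 := by
      have : p ^ k = p ^ d * p ^ (k - d) := by rw [← pow_add]; congr 1; omega
      rw [this, hd, zero_mul]
    exact ⟨1, by rw [this, zero_mul, mul_zero]⟩


end ChainRing

noncomputable def nuC : ℕ → ℂ := fun n => if n = 0 then 1 else if n = 1 then -1 else 0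

lemma nuC_sum (N : ℕ) : ∑ j ∈ range (N + 1), nuC j = if N = 0 then 1 else 0 := by
  induction N with
  | zero => simp [nuC]
  | succ n ih =>
    rw [Finset.sum_range_succ, ih]
    by_cases h : n = 0
    · subst h; norm_num [nuC]
    · simp only [h, if_neg h, Nat.succ_ne_zero, if_false, zero_add]
      have : ¬ (n + 1 = 0) := by omega
      have h1 : ¬ (n + 1 = 1) := by omega
      simp [nuC, this, h1]
      exact h

section Pi
variable {r : ℕ} {R : Fin r → Type*} [∀ i, Ring (R i)] [∀ i, Fintype (R i)]
    [∀ i, Nontrivial (R i)]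
    (hchain : ∀ i, ∀ I J : Ideal (R i), I ≤ J ∨ J ≤ I)
    (p : ∀ i, R i)
    (hp : ∀ i, Ideal.span ({p i} : Set (R i)) = Ideal.jacobson (⊥ : Ideal (R i)))
    (d : Fin r → ℕ) (hd : ∀ i, p i ^ d i = 0)
    (hdmin : ∀ i, ∀ m : ℕ, p i ^ m = 0 → d i ≤ m)

lemma span_singleton_le_iff' {A : Type*} [Ring A] (a : A) (I : Ideal A) :
    Ideal.span {a} ≤ I ↔ a ∈ I := by
  rw [Ideal.span_le, Set.singleton_subset_iff, SetLike.mem_coe]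

lemma mem_span_pi {z x : ∀ i, R i} :
    x ∈ Ideal.span {z} ↔ ∀ i, x i ∈ Ideal.span {z i} := by
  constructor
  · intro hx
    obtain ⟨a, ha⟩ := Submodule.mem_span_singleton.mp hx
    intro i
    exact Submodule.mem_span_singleton.mpr ⟨a i, congrFun ha i⟩
  · intro h
    choose a ha using fun i => Submodule.mem_span_singleton.mp (h i)
    exact Submodule.mem_span_singleton.mpr ⟨fun i => a i, funext ha⟩

include hchain hp hd hdmin in
lemma span_pelt_le_iff {k m : Fin r → ℕ} (hk : ∀ i, k i ≤ d i) (hm : ∀ i, m i ≤ d i) :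
    Ideal.span {pelt p k} ≤ Ideal.span {pelt p m} ↔ ∀ i, m i ≤ k i := by
  rw [span_singleton_le_iff', mem_span_pi]
  constructor
  · intro h i
    have hle : Ideal.span {p i ^ k i} ≤ Ideal.span ({p i ^ m i} : Set (R i)) := by
      rw [span_singleton_le_iff']
      exact h i
    exact (span_pow_le_span_pow' (hchain i) (hp i) (hd i) (hdmin i) (hk i) (hm i)).mp hle
  · intro h i
    have hle := (span_pow_le_span_pow' (hchain i) (hp i) (hd i) (hdmin i) (hk i) (hm i)).mpr (h i)
    exact hle (Ideal.mem_span_singleton_self _)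

include hchain hp hd hdmin in
lemma span_pelt_inj {k m : Fin r → ℕ} (hk : ∀ i, k i ≤ d i) (hm : ∀ i, m i ≤ d i)
    (h : Ideal.span {pelt p k} = Ideal.span {pelt p m}) : k = m := by
  have h1 := (span_pelt_le_iff hchain p hp d hd hdmin hk hm).mp h.le
  have h2 := (span_pelt_le_iff hchain p hp d hd hdmin hm hk).mp h.ge
  funext i
  exact le_antisymm (h2 i) (h1 i)

lemma single_one_mul (i : Fin r) (x : ∀ i, R i) :
    Pi.single i (1 : R i) * x = Pi.single i (x i) := by
  funext j
  by_cases h : j = i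
  · subst h; simp
  · simp [Pi.single_apply, h]

include hchain hp hd hdmin in
lemma ideal_class_pi (I : Ideal (∀ i, R i)) :
    ∃ k : Fin r → ℕ, (∀ i, k i ≤ d i) ∧ I = Ideal.span {pelt p k} := by
  have hT : ∀ i, ∃ T : Ideal (R i), ∀ a : R i, a ∈ T ↔ Pi.single i a ∈ I := by
    intro i
    refine ⟨{ carrier := {a | Pi.single i a ∈ I}
              add_mem' := ?_
              zero_mem' := ?_
              smul_mem' := ?_ }, fun a => Iff.rfl⟩
    · intro a b ha hb
      simp only [Set.mem_setOf_eq] at *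
      rw [Pi.single_add]
      exact I.add_mem ha hb
    · simp only [Set.mem_setOf_eq, Pi.single_zero]
      exact I.zero_mem
    · intro c a ha
      simp only [Set.mem_setOf_eq, smul_eq_mul] at *
      rw [Pi.single_mul]
      exact I.mul_mem_left _ ha
  choose T hTmem using hT
  have hmem : ∀ x : ∀ i, R i, x ∈ I ↔ ∀ i, x i ∈ T i := by
    intro x
    constructor
    · intro hx i
      rw [hTmem]
      rw [← single_one_mul]
      exact I.mul_mem_left _ hx
    · intro h
      have : x = ∑ i, Pi.single i (x i) := (Finset.univ_sum_single x).symm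
      rw [this]
      exact Submodule.sum_mem I fun i _ => (hTmem i (x i)).mp (h i)
  choose k hk hTk using fun i => ideal_class (hchain i) (hp i) (hd i) (hdmin i) (T i)
  refine ⟨k, hk, ?_⟩
  ext x
  rw [hmem, mem_span_pi]
  constructor
  · intro h i
    have := h i
    rw [hTk i] at this
    exact this
  · intro h i
    rw [hTk i]
    exact h i

include hd in
lemma pelt_d_eq_zero : pelt p d = 0 := by
  funext i
  exact hd i

include hd in
lemma span_pelt_d : Ideal.span {pelt p d} = (⊥ : Ideal (∀ i, R i)) := by
  rw [pelt_d_eq_zero p d hd]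
  simp

-- combinatorial lemma
lemma chain_sum (m k D : ℕ) (hmk : m ≤ k) (hk : k ≤ D) :
    ∑ c : Fin (D + 1), (if m ≤ (c : ℕ) ∧ (c : ℕ) ≤ k then nuC ((c : ℕ) - m) else 0)
      = if k = m then 1 else 0 := by
  rw [Fin.sum_univ_eq_sum_range (fun c => if m ≤ c ∧ c ≤ k then nuC (c - m) else 0)]
  rw [← Finset.sum_filter]
  have hfil : (range (D + 1)).filter (fun c => m ≤ c ∧ c ≤ k) = Finset.Icc m k := by
    ext c
    simp only [Finset.mem_filter, Finset.mem_range, Finset.mem_Icc]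
    omega
  rw [hfil]
  have : Finset.Icc m k = Finset.Ico m (k + 1) := by
    ext c; simp [Nat.lt_succ_iff]
  rw [this, Finset.sum_Ico_eq_sum_range]
  have hkm : k + 1 - m = (k - m) + 1 := by omega
  rw [hkm]
  have : ∀ j, nuC (m + j - m) = nuC j := by intro j; congr 1; omega
  simp only [this]
  rw [nuC_sum]
  by_cases h : k = m
  · have : k - m = 0 := by omega
    simp [h, this]
  · have : ¬ (k - m = 0) := by omega
    simp [h, this]

lemma comb_zero {k m : Fin r → ℕ} (hk : ∀ i, k i ≤ d i) (hmk : ∀ i, m i ≤ k i)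
    (hne : k ≠ m) :
    ∑ t : ∀ i, Fin (d i + 1),
      (if ∀ i, m i ≤ (t i : ℕ) ∧ (t i : ℕ) ≤ k i then ∏ i, nuC ((t i : ℕ) - m i) else 0) = 0 := by
  have hstep : ∀ t : ∀ i, Fin (d i + 1),
      (if ∀ i, m i ≤ (t i : ℕ) ∧ (t i : ℕ) ≤ k i then ∏ i, nuC ((t i : ℕ) - m i) else 0)
        = ∏ i, (if m i ≤ (t i : ℕ) ∧ (t i : ℕ) ≤ k i then nuC ((t i : ℕ) - m i) else 0) := by
    intro t
    by_cases h : ∀ i, m i ≤ (t i : ℕ) ∧ (t i : ℕ) ≤ k i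
    · rw [if_pos h]
      exact Finset.prod_congr rfl fun i _ => (if_pos (h i)).symm
    · rw [if_neg h]
      rw [not_forall] at h
      obtain ⟨i, hi⟩ := h
      exact (Finset.prod_eq_zero (f := fun i => if m i ≤ (t i : ℕ) ∧ (t i : ℕ) ≤ k i then nuC ((t i : ℕ) - m i) else 0) (Finset.mem_univ i) (if_neg hi)).symm
  simp only [hstep]
  have := Finset.prod_univ_sum (fun i => (univ : Finset (Fin (d i + 1))))
    (fun i c => if m i ≤ (c : ℕ) ∧ (c : ℕ) ≤ k i then nuC ((c : ℕ) - m i) else 0)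
  rw [show Fintype.piFinset (fun i => (univ : Finset (Fin (d i + 1)))) = univ by simp] at this
  rw [← this]
  obtain ⟨j, hj⟩ : ∃ j, k j ≠ m j := by
    by_contra hcon
    push_neg at hcon
    exact hne (funext hcon)
  apply Finset.prod_eq_zero (Finset.mem_univ j)
  rw [chain_sum (m j) (k j) (d j) (hmk j) (hk j)]
  exact if_neg hj

include hchain hp hd hdmin in
lemma mu_eq [Fintype (Ideal (∀ i, R i))] (μ : Ideal (∀ i, R i) → Ideal (∀ i, R i) → ℂ)
    (hdiag : ∀ I : Ideal (∀ i, R i), μ I I = 1)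
    (hrec : ∀ I J : Ideal (∀ i, R i), I < J →
      ∑ K ∈ univ.filter (fun K : Ideal (∀ i, R i) => I ≤ K ∧ K ≤ J), μ K J = 0)
    (k m : Fin r → ℕ) (hk : ∀ i, k i ≤ d i) (hm : ∀ i, m i ≤ d i) (hmk : ∀ i, m i ≤ k i) :
    μ (Ideal.span {pelt p k}) (Ideal.span {pelt p m}) = ∏ i, nuC (k i - m i) := by
  suffices H : ∀ n (k : Fin r → ℕ), (∀ i, k i ≤ d i) → (∀ i, m i ≤ k i) →
      (∑ i, (k i - m i)) = n →
      μ (Ideal.span {pelt p k}) (Ideal.span {pelt p m}) = ∏ i, nuC (k i - m i) by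
    exact H _ k hk hmk rfl
  intro n
  induction n using Nat.strong_induction_on with
  | _ n ih =>
    intro k hk hmk hsum
    by_cases hkm : k = m
    · subst hkm
      rw [hdiag]
      symm
      apply Finset.prod_eq_one
      intro i _
      simp [nuC]
    · have hle : Ideal.span {pelt p k} ≤ Ideal.span {pelt p m} :=
        (span_pelt_le_iff hchain p hp d hd hdmin hk hm).mpr hmk
      have hlt : Ideal.span {pelt p k} < Ideal.span {pelt p m} := by
        refine lt_of_le_of_ne hle ?_
        intro he
        exact hkm (span_pelt_inj hchain p hp d hd hdmin hk hm he)
      have h0 := hrec _ _ hlt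
      set J := Ideal.span {pelt p m} with hJ
      set T : Finset (∀ i, Fin (d i + 1)) :=
        univ.filter (fun t => ∀ i, m i ≤ (t i : ℕ) ∧ (t i : ℕ) ≤ k i) with hTdef
      have htmem : ∀ t ∈ T, ∀ i, m i ≤ (t i : ℕ) ∧ (t i : ℕ) ≤ k i := by
        intro t ht
        simpa [hTdef] using ht
      have htd : ∀ (t : ∀ i, Fin (d i + 1)) (i : Fin r), ((t i : ℕ)) ≤ d i :=
        fun t i => Nat.lt_succ_iff.mp (t i).isLt
      have hbij : ∑ K ∈ univ.filter
            (fun K : Ideal (∀ i, R i) => Ideal.span {pelt p k} ≤ K ∧ K ≤ J), μ K J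
          = ∑ t ∈ T, μ (Ideal.span {pelt p (fun i => (t i : ℕ))}) J := by
        refine (Finset.sum_nbij (fun t => Ideal.span {pelt p (fun i => (t i : ℕ))})
          ?_ ?_ ?_ ?_).symm
        · intro t ht
          have hc := htmem t ht
          simp only [mem_filter, mem_univ, true_and]
          constructor
          · exact (span_pelt_le_iff hchain p hp d hd hdmin hk (fun i => htd t i)).mpr
              (fun i => (hc i).2)
          · exact (span_pelt_le_iff hchain p hp d hd hdmin (fun i => htd t i) hm).mpr
              (fun i => (hc i).1)
        · intro t1 h1 t2 h2 heq
          have := span_pelt_inj hchain p hp d hd hdmin (fun i => htd t1 i)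
            (fun i => htd t2 i) heq
          funext i
          exact Fin.ext (congrFun this i)
        · intro K hK
          simp only [Finset.coe_filter, Set.mem_setOf_eq, Finset.mem_univ, true_and] at hK
          obtain ⟨hK1, hK2⟩ := hK
          obtain ⟨k', hk', hKk'⟩ := ideal_class_pi hchain p hp d hd hdmin K
          have hub : ∀ i, k' i ≤ k i := by
            rw [hKk'] at hK1
            exact (span_pelt_le_iff hchain p hp d hd hdmin hk hk').mp hK1
          have hlb : ∀ i, m i ≤ k' i := by
            rw [hKk'] at hK2
            exact (span_pelt_le_iff hchain p hp d hd hdmin hk' hm).mp hK2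
          refine ⟨fun i => ⟨k' i, Nat.lt_succ_of_le (hk' i)⟩, ?_, ?_⟩
          · simp only [Finset.mem_coe, hTdef, mem_filter, mem_univ, true_and]
            intro i
            exact ⟨hlb i, hub i⟩
          · simp only [hKk']
        · intro t ht
          rfl
      rw [hbij] at h0
      set kF : ∀ i, Fin (d i + 1) := fun i => ⟨k i, Nat.lt_succ_of_le (hk i)⟩ with hkF
      have hkFT : kF ∈ T := by
        simp only [hTdef, mem_filter, mem_univ, true_and]
        intro i
        exact ⟨hmk i, le_refl _⟩
      have hsplit := Finset.add_sum_erase T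
        (fun t => μ (Ideal.span {pelt p (fun i => (t i : ℕ))}) J) hkFT
      have hcoekF : (fun i => ((kF i : ℕ))) = k := rfl
      have hIH : ∀ t ∈ T.erase kF,
          μ (Ideal.span {pelt p (fun i => (t i : ℕ))}) J
            = ∏ i, nuC ((t i : ℕ) - m i) := by
        intro t ht
        obtain ⟨htne, htT⟩ := Finset.mem_erase.mp ht
        have hc := htmem t htT
        have hne : (fun i => ((t i : ℕ))) ≠ k := by
          intro he
          apply htne
          funext i
          exact Fin.ext (congrFun he i)
        have hltn : (∑ i, ((t i : ℕ) - m i)) < n := by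
          rw [← hsum]
          apply Finset.sum_lt_sum
          · intro i _
            exact Nat.sub_le_sub_right (hc i).2 _
          · by_contra hcon
            push_neg at hcon
            apply hne
            funext i
            have h1 := (hc i).2
            have h2 := hcon i (Finset.mem_univ i)
            have h3 := (hc i).1
            have h4 := hmk i
            omega
        exact ih _ hltn _ (fun i => htd t i) (fun i => (hc i).1) rfl
      rw [Finset.sum_congr rfl hIH] at hsplit
      have hcomb : ∑ t ∈ T, (∏ i, nuC ((t i : ℕ) - m i)) = 0 := by
        have := comb_zero d hk hmk hkm
        rw [hTdef, Finset.sum_filter]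
        exact this
      have hsplit2 := Finset.add_sum_erase T
        (fun t => ∏ i, nuC ((t i : ℕ) - m i)) hkFT
      rw [hcomb] at hsplit2
      -- hsplit : μ I J + ∑_erase ∏ = ∑ T μ = 0 (via h0)
      rw [h0] at hsplit
      have hA : μ (Ideal.span {pelt p k}) J
          + ∑ x ∈ T.erase kF, ∏ i, nuC ((x i : ℕ) - m i) = 0 := hsplit
      have hB : (∏ i, nuC (k i - m i))
          + ∑ x ∈ T.erase kF, ∏ i, nuC ((x i : ℕ) - m i) = 0 := hsplit2
      linear_combination hA - hB

end Pi

section PiMain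
variable {r : ℕ} {R : Fin r → Type*} [∀ i, Ring (R i)] [∀ i, Fintype (R i)]
    [∀ i, Nontrivial (R i)]

lemma span_unit_mul {S : Type*} [Ring S] (u : Sˣ) (a : S) :
    Ideal.span {(↑u : S) * a} = Ideal.span {a} := by
  apply le_antisymm
  · rw [Ideal.span_le, Set.singleton_subset_iff, SetLike.mem_coe]
    exact Ideal.mul_mem_left _ _ (Ideal.mem_span_singleton_self a)
  · rw [Ideal.span_le, Set.singleton_subset_iff, SetLike.mem_coe]
    exact Submodule.mem_span_singleton.mpr
      ⟨↑u⁻¹, by rw [smul_eq_mul, ← mul_assoc, u.inv_mul, one_mul]⟩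

def piUnit {r : ℕ} {R : Fin r → Type*} [∀ i, Monoid (R i)] (u : ∀ i, (R i)ˣ) :
    (∀ i, R i)ˣ :=
  ⟨fun i => ↑(u i), fun i => ↑(u i)⁻¹,
    funext fun i => (u i).mul_inv, funext fun i => (u i).inv_mul⟩

lemma corr_eps (p : ∀ i, R i) (w : (∀ i, R i) → ℂ)
    (hwl : ∀ (u : (∀ i, R i)ˣ) (a : ∀ i, R i), w ((u : ∀ i, R i) * a) = w a)
    (t : Fin r → ℕ) (y : ∀ i, R i) :
    ∑ a : ∀ i, R i, w (a * y) * eps p t a = w (pelt p t * y) := by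
  classical
  set c : ℂ := ((Nat.card {b : ∀ i, R i // ∃ u : (∀ i, R i)ˣ,
      b = (u : ∀ i, R i) * pelt p t} : ℂ))⁻¹ with hc
  have step1 : ∑ a : ∀ i, R i, w (a * y) * eps p t a
      = ∑ a ∈ univ.filter (fun a : ∀ i, R i =>
          ∃ u : (∀ i, R i)ˣ, a = (u : ∀ i, R i) * pelt p t), w (a * y) * c := by
    rw [Finset.sum_filter]
    apply Finset.sum_congr rfl
    intro a _
    by_cases h : ∃ u : (∀ i, R i)ˣ, a = (u : ∀ i, R i) * pelt p t
    · rw [if_pos h]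
      have he : eps p t a = c := by unfold eps; rw [if_pos h, hc]
      rw [he]
    · have he : eps p t a = 0 := by unfold eps; rw [if_neg h]
      rw [he, mul_zero, if_neg h]
  rw [step1]
  have step2 : ∑ a ∈ univ.filter (fun a : ∀ i, R i =>
      ∃ u : (∀ i, R i)ˣ, a = (u : ∀ i, R i) * pelt p t), w (a * y) * c
      = ∑ _a ∈ univ.filter (fun a : ∀ i, R i =>
      ∃ u : (∀ i, R i)ˣ, a = (u : ∀ i, R i) * pelt p t), w (pelt p t * y) * c := by
    apply Finset.sum_congr rfl
    intro a ha
    obtain ⟨u, hu⟩ := (Finset.mem_filter.mp ha).2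
    rw [hu, mul_assoc, hwl]
  rw [step2, Finset.sum_const, nsmul_eq_mul]
  have hcardeq : (Nat.card {b : ∀ i, R i // ∃ u : (∀ i, R i)ˣ,
      b = (u : ∀ i, R i) * pelt p t})
      = (univ.filter (fun a : ∀ i, R i =>
          ∃ u : (∀ i, R i)ˣ, a = (u : ∀ i, R i) * pelt p t)).card := by
    rw [Nat.card_eq_fintype_card]
    exact Fintype.card_subtype _
  have hne : (univ.filter (fun a : ∀ i, R i =>
      ∃ u : (∀ i, R i)ˣ, a = (u : ∀ i, R i) * pelt p t)).Nonempty := by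
    refine ⟨pelt p t, ?_⟩
    rw [Finset.mem_filter]
    exact ⟨Finset.mem_univ _, ⟨1, by rw [Units.val_one, one_mul]⟩⟩
  have hcne : ((univ.filter (fun a : ∀ i, R i =>
      ∃ u : (∀ i, R i)ˣ, a = (u : ∀ i, R i) * pelt p t)).card : ℂ) ≠ 0 := by
    rw [Nat.cast_ne_zero]
    exact Finset.card_ne_zero_of_mem (Finset.mem_filter.mpr
      ⟨Finset.mem_univ _, ⟨1, by rw [Units.val_one, one_mul]⟩⟩)
  rw [hc, hcardeq]
  field_simp

lemma pow_eq_pow_min {S : Type*} [Ring S] {p : S} {d : ℕ} (hd : p ^ d = 0) (e : ℕ) :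
    p ^ e = p ^ (min e d) := by
  rcases le_total e d with h | h
  · rw [min_eq_left h]
  · rw [min_eq_right h]
    have h1 : p ^ e = p ^ d * p ^ (e - d) := by rw [← pow_add]; congr 1; omega
    rw [h1, hd, zero_mul]

lemma nuC_zero : nuC 0 = 1 := by simp [nuC]
lemma nuC_one : nuC 1 = -1 := by simp [nuC]
lemma nuC_big {n : ℕ} (h : 2 ≤ n) : nuC n = 0 := by
  have h1 : ¬ (n = 0) := by omega
  have h2 : ¬ (n = 1) := by omega
  simp [nuC, h1, h2]


end PiMain

/-- Action of correlation with the basis element `η_x` on an invariant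
weight `w` over a finite product of finite chain rings:
`(w ⊛ η_x)(y) = ∑_{x^⊥ ≤ t} μ(0,Rxt) w(ty)` if `Rx ≤ Ry`, and `0`
otherwise. -/
theorem corr_eta_invariant_weight
    (r : ℕ) (R : Fin r → Type*) [∀ i, Ring (R i)] [∀ i, Fintype (R i)]
    [∀ i, Nontrivial (R i)] [Fintype (Ideal (∀ i, R i))]
    (hchainL : ∀ i, ∀ I J : Ideal (R i), I ≤ J ∨ J ≤ I)
    (hchainR : ∀ i, ∀ I J : Ideal (R i)ᵐᵒᵖ, I ≤ J ∨ J ≤ I)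
    (p : ∀ i, R i)
    (hp : ∀ i, Ideal.span ({p i} : Set (R i)) = Ideal.jacobson (⊥ : Ideal (R i)))
    (d : Fin r → ℕ) (hd : ∀ i, p i ^ d i = 0)
    (hdmin : ∀ i, ∀ m : ℕ, p i ^ m = 0 → d i ≤ m)
    (μ : Ideal (∀ i, R i) → Ideal (∀ i, R i) → ℂ)
    (hzero : ∀ I J : Ideal (∀ i, R i), ¬ I ≤ J → μ I J = 0)
    (hdiag : ∀ I : Ideal (∀ i, R i), μ I I = 1)
    (hrec : ∀ I J : Ideal (∀ i, R i), I < J →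
      ∑ K ∈ univ.filter (fun K : Ideal (∀ i, R i) => I ≤ K ∧ K ≤ J), μ K J = 0)
    (w : (∀ i, R i) → ℂ) (hw0 : w 0 = 0)
    (hwl : ∀ (u : (∀ i, R i)ˣ) (a : ∀ i, R i), w ((u : ∀ i, R i) * a) = w a)
    (hwr : ∀ (u : (∀ i, R i)ˣ) (a : ∀ i, R i), w (a * (u : ∀ i, R i)) = w a)
    (x : Fin r → ℕ) (hx : ∀ i, x i ≤ d i) (hxne : pelt p x ≠ 0) :
    ∀ y : ∀ i, R i,
      (Ideal.span {pelt p x} ≤ Ideal.span {y} →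
        (∑ a : ∀ i, R i, w (a * y) * eta p d x μ a) =
          ∑ t : ∀ i, Fin (d i + 1),
            if ∀ i, (t i : ℕ) ≤ d i - x i then
              μ ⊥ (Ideal.span {pelt p x * pelt p (fun i => (t i : ℕ))}) *
                w (pelt p (fun i => (t i : ℕ)) * y)
            else 0) ∧
      (¬ Ideal.span {pelt p x} ≤ Ideal.span {y} →
        (∑ a : ∀ i, R i, w (a * y) * eta p d x μ a) = 0) := by
  intro y
  have key : (∑ a : ∀ i, R i, w (a * y) * eta p d x μ a)
      = ∑ t : ∀ i, Fin (d i + 1),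
          if ∀ i, (t i : ℕ) ≤ d i - x i then
            μ ⊥ (Ideal.span {pelt p x * pelt p (fun i => (t i : ℕ))}) *
              w (pelt p (fun i => (t i : ℕ)) * y)
          else 0 := by
    calc ∑ a : ∀ i, R i, w (a * y) * eta p d x μ a
        = ∑ a : ∀ i, R i, ∑ t : ∀ i, Fin (d i + 1), w (a * y) *
            (if ∀ i, (t i : ℕ) ≤ d i - x i then
              μ ⊥ (Ideal.span {pelt p x * pelt p (fun i => (t i : ℕ))}) *
                eps p (fun i => (t i : ℕ)) a else 0) := by
          apply Finset.sum_congr rfl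
          intro a _
          unfold eta
          rw [Finset.mul_sum]
      _ = ∑ t : ∀ i, Fin (d i + 1), ∑ a : ∀ i, R i, w (a * y) *
            (if ∀ i, (t i : ℕ) ≤ d i - x i then
              μ ⊥ (Ideal.span {pelt p x * pelt p (fun i => (t i : ℕ))}) *
                eps p (fun i => (t i : ℕ)) a else 0) := Finset.sum_comm
      _ = ∑ t : ∀ i, Fin (d i + 1),
          (if ∀ i, (t i : ℕ) ≤ d i - x i then
            μ ⊥ (Ideal.span {pelt p x * pelt p (fun i => (t i : ℕ))}) *
              w (pelt p (fun i => (t i : ℕ)) * y)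
          else 0) := by
          apply Finset.sum_congr rfl
          intro t _
          by_cases hcond : ∀ i, (t i : ℕ) ≤ d i - x i
          · simp only [if_pos hcond]
            rw [← corr_eps p w hwl (fun i => (t i : ℕ)) y, Finset.mul_sum]
            apply Finset.sum_congr rfl
            intro a _
            ring
          · simp only [if_neg hcond, mul_zero, Finset.sum_const_zero]
  refine ⟨fun _ => key, ?_⟩
  intro hny
  rw [key]
  have hy := fun i => elt_class (hchainL i) (hp i) (hd i) (hdmin i) (y i)
  choose v hv u hyu using hy
  have hj : ∃ j, x j < v j := by
    by_contra hcon
    push_neg at hcon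
    apply hny
    refine Ideal.span_le.mpr (Set.singleton_subset_iff.mpr ?_)
    rw [SetLike.mem_coe, mem_span_pi]
    intro i
    show p i ^ x i ∈ Ideal.span {y i}
    rw [hyu i, span_unit_mul]
    exact (span_pow_le_span_pow' (hchainL i) (hp i) (hd i) (hdmin i)
      (hx i) (hv i)).mpr (hcon i) (Ideal.mem_span_singleton_self _)
  obtain ⟨j, hj⟩ := hj
  have hw_red : ∀ t : ∀ i, Fin (d i + 1),
      w (pelt p (fun i => (t i : ℕ)) * y)
        = w (pelt p (fun i => min ((t i : ℕ) + v i) (d i))) := by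
    intro t
    have hu0 := fun i => unit_transfer (hchainL i) (hp i) (hd i) (hdmin i) ((t i : ℕ)) (u i)
    choose u' hu' using hu0
    have heq : pelt p (fun i => (t i : ℕ)) * y
        = ↑(piUnit u') * pelt p (fun i => min ((t i : ℕ) + v i) (d i)) := by
      funext i
      show p i ^ (t i : ℕ) * y i = ↑(u' i) * p i ^ (min ((t i : ℕ) + v i) (d i))
      rw [hyu i, ← mul_assoc, hu' i, mul_assoc, ← pow_add, pow_eq_pow_min (hd i)]
    rw [heq, hwl]
  have hmu_red : ∀ t : ∀ i, Fin (d i + 1), (∀ i, (t i : ℕ) ≤ d i - x i) →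
      μ ⊥ (Ideal.span {pelt p x * pelt p (fun i => (t i : ℕ))})
        = ∏ i, nuC (d i - (x i + (t i : ℕ))) := by
    intro t hcond
    have hxt : pelt p x * pelt p (fun i => (t i : ℕ))
        = pelt p (fun i => x i + (t i : ℕ)) := by
      funext i
      exact (pow_add (p i) (x i) ((t i : ℕ))).symm
    rw [hxt, ← span_pelt_d p d hd]
    exact mu_eq hchainL p hp d hd hdmin μ hdiag hrec d (fun i => x i + (t i : ℕ))
      (fun i => le_refl _)
      (fun i => by show x i + (t i : ℕ) ≤ d i; have h1 := hcond i; have h2 := hx i; omega)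
      (fun i => by show x i + (t i : ℕ) ≤ d i; have h1 := hcond i; have h2 := hx i; omega)
  have hrw : ∀ t : ∀ i, Fin (d i + 1),
      (if ∀ i, (t i : ℕ) ≤ d i - x i then
        μ ⊥ (Ideal.span {pelt p x * pelt p (fun i => (t i : ℕ))}) *
          w (pelt p (fun i => (t i : ℕ)) * y)
      else 0)
      = (if ∀ i, (t i : ℕ) ≤ d i - x i then
          (∏ i, nuC (d i - (x i + (t i : ℕ)))) *
            w (pelt p (fun i => min ((t i : ℕ) + v i) (d i)))
        else 0) := by
    intro t
    by_cases hcond : ∀ i, (t i : ℕ) ≤ d i - x i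
    · rw [if_pos hcond, if_pos hcond, hmu_red t hcond, hw_red t]
    · rw [if_neg hcond, if_neg hcond]
  rw [Finset.sum_congr rfl (fun t _ => hrw t)]
  -- involution
  have hvj : v j ≤ d j := hv j
  have hxd : x j + 1 ≤ d j := by omega
  set D : ℕ := d j - x j with hD
  have hD1 : 1 ≤ D := by omega
  have hDd : D ≤ d j := by omega
  set flip : Fin (d j + 1) → Fin (d j + 1) := fun c =>
    if (c : ℕ) = D then ⟨D - 1, by omega⟩
    else if (c : ℕ) = D - 1 then ⟨D, by omega⟩ else c with hflipdef
  have hflip_val : ∀ c : Fin (d j + 1), ((flip c : ℕ))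
      = if (c : ℕ) = D then D - 1 else if (c : ℕ) = D - 1 then D else (c : ℕ) := by
    intro c
    simp only [hflipdef]
    split_ifs <;> rfl
  have hflip_flip : ∀ c : Fin (d j + 1), flip (flip c) = c := by
    intro c
    apply Fin.ext
    rw [hflip_val, hflip_val]
    by_cases h1 : (c : ℕ) = D
    · rw [if_pos h1]
      have h2 : ¬ (D - 1 = D) := by omega
      have h3 : D - 1 = D - 1 := rfl
      rw [if_neg h2, if_pos h3, h1]
    · rw [if_neg h1]
      by_cases h2 : (c : ℕ) = D - 1
      · rw [if_pos h2]
        have h3 : D = D := rfl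
        rw [if_pos h3, h2]
      · rw [if_neg h2, if_neg h1, if_neg h2]
  set f : (∀ i, Fin (d i + 1)) → ℂ := fun t =>
    if ∀ i, (t i : ℕ) ≤ d i - x i then
      (∏ i, nuC (d i - (x i + (t i : ℕ)))) *
        w (pelt p (fun i => min ((t i : ℕ) + v i) (d i)))
    else 0 with hf
  show ∑ t : ∀ i, Fin (d i + 1), f t = 0
  set g : ∀ t : ∀ i, Fin (d i + 1), t ∈ (univ : Finset (∀ i, Fin (d i + 1))) →
      (∀ i, Fin (d i + 1)) := fun t _ => Function.update t j (flip (t j)) with hg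
  have hg_j : ∀ t ht, (g t ht) j = flip (t j) := by
    intro t ht
    rw [hg]
    exact Function.update_self j (flip (t j)) t
  have hg_i : ∀ t ht i, i ≠ j → (g t ht) i = t i := by
    intro t ht i hi
    rw [hg]
    exact Function.update_of_ne hi (flip (t j)) t
  have hcond_g : ∀ t ht, (∀ i, (t i : ℕ) ≤ d i - x i) →
      (∀ i, ((g t ht) i : ℕ) ≤ d i - x i) := by
    intro t ht hcond i
    by_cases hij : i = j
    · subst hij
      rw [hg_j t ht, hflip_val]
      have := hcond i
      split_ifs <;> omega
    · rw [hg_i t ht i hij]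
      exact hcond i
  have hg_mem : ∀ t ht, g t ht ∈ (univ : Finset (∀ i, Fin (d i + 1))) :=
    fun t ht => Finset.mem_univ _
  have hg_g : ∀ t ht, g (g t ht) (hg_mem t ht) = t := by
    intro t ht
    funext i
    by_cases hij : i = j
    · subst hij
      rw [hg_j (g t ht) (hg_mem t ht), hg_j t ht, hflip_flip]
    · rw [hg_i (g t ht) (hg_mem t ht) i hij, hg_i t ht i hij]
  have hpair_or : ∀ t : ∀ i, Fin (d i + 1), (∀ i, (t i : ℕ) ≤ d i - x i) →
      ¬ ((t j : ℕ) = D ∨ (t j : ℕ) = D - 1) → f t = 0 := by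
    intro t hcond hnp
    push_neg at hnp
    rw [hf]
    simp only [if_pos hcond]
    have hbig : 2 ≤ d j - (x j + (t j : ℕ)) := by
      have := hcond j
      omega
    rw [Finset.prod_eq_zero (Finset.mem_univ j) (nuC_big hbig), zero_mul]
  have hfg : ∀ t ht, f t + f (g t ht) = 0 := by
    intro t ht
    by_cases hcond : ∀ i, (t i : ℕ) ≤ d i - x i
    · by_cases hpair : (t j : ℕ) = D ∨ (t j : ℕ) = D - 1
      · -- cancelling pair
        have hcondg := hcond_g t ht hcond
        have hwq : pelt p (fun i => min (((g t ht) i : ℕ) + v i) (d i))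
            = pelt p (fun i => min ((t i : ℕ) + v i) (d i)) := by
          funext i
          show p i ^ (min (((g t ht) i : ℕ) + v i) (d i))
            = p i ^ (min ((t i : ℕ) + v i) (d i))
          by_cases hij : i = j
          · subst hij
            congr 1
            rw [hg_j t ht, hflip_val]
            rcases hpair with h1 | h1
            · rw [if_pos h1]
              omega
            · by_cases h2 : (t i : ℕ) = D
              · rw [if_pos h2]; omega
              · rw [if_neg h2, if_pos h1]; omega
          · rw [hg_i t ht i hij]
        have hprod : (∏ i, nuC (d i - (x i + ((g t ht) i : ℕ))))
            = - ∏ i, nuC (d i - (x i + (t i : ℕ))) := by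
          rw [← Finset.mul_prod_erase univ
            (fun i => nuC (d i - (x i + ((g t ht) i : ℕ)))) (Finset.mem_univ j)]
          rw [← Finset.mul_prod_erase univ
            (fun i => nuC (d i - (x i + (t i : ℕ)))) (Finset.mem_univ j)]
          have herase : ∏ i ∈ univ.erase j, nuC (d i - (x i + ((g t ht) i : ℕ)))
              = ∏ i ∈ univ.erase j, nuC (d i - (x i + (t i : ℕ))) := by
            apply Finset.prod_congr rfl
            intro i hi
            rw [hg_i t ht i (Finset.ne_of_mem_erase hi)]
          rw [herase]
          rcases hpair with h1 | h1
          · have e1 : d j - (x j + (t j : ℕ)) = 0 := by omega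
            have e2 : d j - (x j + ((g t ht) j : ℕ)) = 1 := by
              rw [hg_j t ht, hflip_val, if_pos h1]
              omega
            rw [e1, e2, nuC_zero, nuC_one]
            ring
          · by_cases h2 : (t j : ℕ) = D
            · have e1 : d j - (x j + (t j : ℕ)) = 0 := by omega
              have e2 : d j - (x j + ((g t ht) j : ℕ)) = 1 := by
                rw [hg_j t ht, hflip_val, if_pos h2]
                omega
              rw [e1, e2, nuC_zero, nuC_one]
              ring
            · have e1 : d j - (x j + (t j : ℕ)) = 1 := by omega
              have e2 : d j - (x j + ((g t ht) j : ℕ)) = 0 := by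
                rw [hg_j t ht, hflip_val, if_neg h2, if_pos h1]
                omega
              rw [e1, e2, nuC_zero, nuC_one]
              ring
        rw [hf]
        simp only [if_pos hcond, if_pos hcondg]
        rw [hwq, hprod]
        ring
      · -- fixed point, term is zero
        have hfz := hpair_or t hcond hpair
        have hgt : g t ht = t := by
          funext i
          by_cases hij : i = j
          · subst hij
            rw [hg_j t ht]
            apply Fin.ext
            rw [hflip_val]
            push_neg at hpair
            rw [if_neg hpair.1, if_neg hpair.2]
          · exact hg_i t ht i hij
        rw [hgt, hfz, add_zero]
    · have hcondg : ¬ (∀ i, ((g t ht) i : ℕ) ≤ d i - x i) := by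
        intro hcg
        apply hcond
        have := hcond_g (g t ht) (hg_mem t ht) hcg
        rw [hg_g t ht] at this
        exact this
      rw [hf]
      simp only [if_neg hcond, if_neg hcondg, add_zero]
  have hg_ne : ∀ t ht, f t ≠ 0 → g t ht ≠ t := by
    intro t ht hft hgt
    by_cases hcond : ∀ i, (t i : ℕ) ≤ d i - x i
    · by_cases hpair : (t j : ℕ) = D ∨ (t j : ℕ) = D - 1
      · have : ((g t ht) j : ℕ) = (t j : ℕ) := by rw [hgt]
        rw [hg_j t ht, hflip_val] at this
        rcases hpair with h1 | h1
        · rw [if_pos h1] at this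
          omega
        · by_cases h2 : (t j : ℕ) = D
          · rw [if_pos h2] at this; omega
          · rw [if_neg h2, if_pos h1] at this; omega
      · exact hft (hpair_or t hcond hpair)
    · apply hft
      rw [hf]
      simp only [if_neg hcond]
  exact Finset.sum_involution g hfg hg_ne hg_mem hg_g
end
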